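/- Let (R_{ij}, Δ⁰_i) be a partial graded odd form ring of rank ℓ ≥ 3 satisfying (R29) and (R30), and suppose that for every i ≠ 0 there is a group homomorphism u ↦ u·(−1) : Δ⁰_i → Δ⁰_i satisfying (a∗b)·(−1) = a∗b and (u·b)·(−1) = u·(−b) for all a ∈ R_{−i,j}, b ∈ R_{ji}, u ∈ Δ⁰_j with |i|, |j| distinct and nonzero. Then (R_{ij}, Δ⁰_i) carries a structure of a partial graded odd form ℤ-algebra, with the smallest possible augmentation D_i^min = ⟨R_{−i,j}∗R_{ji} : |j| ∉ {0, |i|}⟩ and the largest possible augmentation D_i^max = {u ∈ Δ⁰_i : u = u·(−1) and u∘Δ⁰_j = 0 for all j with |j| ∉ {0, |i|}}, which equals {u ∈ Δ⁰_i : u = u·(−1), u∘Δ⁰_{j*} = u∘Δ⁰_{−j*} = 0} for any fixed j* with |j*| ∉ {0, |i|}. Moreover, the right action of the multiplicative monoid of ℤ on each Δ⁰_i is uniquely determined; explicitly, u·n = binom(n+1, 2)·u ∔ binom(n, 2)·(u·(−1)) where k·u denotes the k-th power of u in Δ⁰_i. -/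

import Mathlib

/-- Transport along equalities of indices. -/
def rc2 {F : ℤ → ℤ → Type} {i j i' j' : ℤ} (hi : i = i') (hj : j = j') (a : F i j) :
    F i' j' := cast (by rw [hi, hj]) a

/-- An admissible index: nonzero and of absolute value at most `ℓ`. -/
def adm (ℓ : ℕ) (i : ℤ) : Prop := i ≠ 0 ∧ |i| ≤ (ℓ : ℤ)

/-- Two admissible indices with distinct absolute values. -/
def adm2 (ℓ : ℕ) (i j : ℤ) : Prop := adm ℓ i ∧ adm ℓ j ∧ |i| ≠ |j|

/-- Three admissible indices with pairwise distinct absolute values. -/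
def adm3 (ℓ : ℕ) (i j k : ℤ) : Prop :=
  adm ℓ i ∧ adm ℓ j ∧ adm ℓ k ∧ |i| ≠ |j| ∧ |i| ≠ |k| ∧ |j| ≠ |k|

/-- Four admissible indices with pairwise distinct absolute values. -/
def adm4 (ℓ : ℕ) (i j k l : ℤ) : Prop :=
  adm3 ℓ i j k ∧ adm ℓ l ∧ |i| ≠ |l| ∧ |j| ≠ |l| ∧ |k| ≠ |l|

/-- A partial graded odd form ring of rank `ℓ` (components `R i j` for nonzero
`i, j ∈ [-ℓ, ℓ]` with `|i| ≠ |j|` and odd form parameters `Δ i` for nonzero `i`,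
with all operations and the identities (R1)–(R28); operations at inadmissible
indices are junk data, all axioms being guarded by admissibility). -/
structure PGOFR (ℓ : ℕ) where
  R : ℤ → ℤ → Type
  Δ : ℤ → Type
  [instR : ∀ i j, AddGroup (R i j)]
  [instΔ : ∀ i, AddGroup (Δ i)]
  inv : ∀ i j, R i j → R (-j) (-i)
  mul : ∀ i j k, R i j → R j k → R i k
  star : ∀ i j, R (-i) j → R j i → Δ i
  circ : ∀ i j, Δ i → Δ j → R (-i) j
  tri : ∀ i j, Δ i → R i j → R (-i) j
  dot : ∀ i j, Δ i → R i j → Δ j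
  -- the involution is an anti-isomorphism
  inv_add : ∀ i j, adm2 ℓ i j → ∀ a b : R i j, inv i j (a + b) = inv i j b + inv i j a
  inv_inv : ∀ i j, adm2 ℓ i j → ∀ a : R i j,
    rc2 (F := R) (neg_neg i) (neg_neg j) (inv (-j) (-i) (inv i j a)) = a
  -- (R1)
  r1 : ∀ i j k, adm3 ℓ i j k → ∀ (a : R i j) (b : R j k) (c : R i k),
    mul i j k a b + c = c + mul i j k a b
  -- (R2)
  r2 : ∀ i j k, adm3 ℓ i j k → ∀ (a b : R i j) (c : R j k),
    mul i j k (a + b) c = mul i j k a c + mul i j k b c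
  -- (R3)
  r3 : ∀ i j k, adm3 ℓ i j k → ∀ (a : R i j) (b c : R j k),
    mul i j k a (b + c) = mul i j k a b + mul i j k a c
  -- (R4)
  r4 : ∀ i j k, adm3 ℓ i j k → ∀ (a : R i j) (b : R j k),
    inv i k (mul i j k a b) = mul (-k) (-j) (-i) (inv j k b) (inv i j a)
  -- (R5)
  r5 : ∀ i j, adm2 ℓ i j → ∀ (a : R (-i) j) (b : R j i) (u : Δ i),
    star i j a b + u = u + star i j a b
  -- (R6)
  r6 : ∀ i j, adm2 ℓ i j → ∀ (a b : R (-i) j) (c : R j i),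
    star i j (a + b) c = star i j a c + star i j b c
  -- (R7)
  r7 : ∀ i j, adm2 ℓ i j → ∀ (a : R (-i) j) (b c : R j i),
    star i j a (b + c) = star i j a b + star i j a c
  -- (R8)
  r8 : ∀ i j, adm2 ℓ i j → ∀ (a : R (-i) j) (b : R j i),
    star i j a b +
      star i (-j) (inv j i b) (rc2 (F := R) rfl (neg_neg i) (inv (-i) j a)) = 0
  -- (R9)
  r9 : ∀ i j, adm2 ℓ i j → ∀ (u : Δ i) (v : Δ j) (a : R (-i) j),
    a + circ i j u v = circ i j u v + a
  -- (R10)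
  r10 : ∀ i j, adm2 ℓ i j → ∀ (u v : Δ i) (w : Δ j),
    circ i j (u + v) w = circ i j u w + circ i j v w
  -- (R11)
  r11 : ∀ i j, adm2 ℓ i j → ∀ (u : Δ i) (v w : Δ j),
    circ i j u (v + w) = circ i j u v + circ i j u w
  -- (R12)
  r12 : ∀ i j, adm2 ℓ i j → ∀ (u : Δ i) (v : Δ j),
    rc2 (F := R) rfl (neg_neg i) (inv (-i) j (circ i j u v)) = circ j i v u
  -- (R13)
  r13 : ∀ i j, adm2 ℓ i j → ∀ (u : Δ i) (a : R (-j) (-i)) (b : R (-i) j),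
    circ i j u (star j (-i) a b) +
      tri i j u (-(rc2 (F := R) (neg_neg i) (neg_neg j) (inv (-j) (-i) a))) + b =
    b + tri i j u (-(rc2 (F := R) (neg_neg i) (neg_neg j) (inv (-j) (-i) a)))
  -- (R14)
  r14 : ∀ i j, adm2 ℓ i j → ∀ (u : Δ i) (a : R i j) (v : Δ j),
    dot i j u a + v = v + dot i j u a - star j (-i) (inv i j a) (circ i j u v)
  -- (R15)
  r15 : ∀ i j, adm2 ℓ i j → ∀ (u v : Δ i) (a : R i j),
    dot i j (u + v) a = dot i j u a + dot i j v a
  -- (R16)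
  r16 : ∀ i j, adm2 ℓ i j → ∀ (u v : Δ i) (a : R i j),
    tri i j (u + v) a = tri i j v a + circ i j u (dot i j v (-a)) + tri i j u a
  -- (R17)
  r17 : ∀ i j, adm2 ℓ i j → ∀ (u : Δ i) (a b : R i j),
    tri i j u (a + b) = tri i j u a + tri i j u b
  -- (R18)
  r18 : ∀ i j, adm2 ℓ i j → ∀ (u : Δ i) (a b : R i j),
    dot i j u (a + b) = dot i j u a + star j (-i) (inv i j b) (tri i j u a) + dot i j u b
  -- (R19)
  r19 : ∀ i j k l, adm4 ℓ i j k l → ∀ (a : R i j) (b : R j k) (c : R k l),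
    mul i k l (mul i j k a b) c = mul i j l a (mul j k l b c)
  -- (R20)
  r20 : ∀ i j k, adm3 ℓ i j k → ∀ (a : R (-i) j) (b : R j k) (c : R k i),
    star i k (mul (-i) j k a b) c = star i j a (mul j k i b c)
  -- (R21)
  r21 : ∀ i j k, adm3 ℓ i j k → ∀ (u : Δ i) (a : R (-j) k) (b : R k j),
    circ i j u (star j k a b) = 0
  -- (R22)
  r22 : ∀ i j k, adm3 ℓ i j k → ∀ (u : Δ i) (v : Δ j) (a : R j k),
    circ i k u (dot j k v a) = mul (-i) j k (circ i j u v) a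
  -- (R23)
  r23 : ∀ i j k, adm3 ℓ i j k → ∀ (u : Δ i) (a : R i j) (b : R i k),
    mul (-j) (-i) k (inv i j a) (tri i k u b) +
      circ j k (dot i j u a) (dot i k u b) +
      mul (-j) i k (rc2 (F := R) rfl (neg_neg i) (inv (-i) j (tri i j u a))) b = 0
  -- (R24)
  r24 : ∀ i j k, adm3 ℓ i j k → ∀ (a : R (-i) j) (b : R j i) (c : R i k),
    tri i k (star i j a b) c =
      mul (-i) j k a (mul j i k b c) -
      mul (-i) (-j) k (inv j i b)
        (mul (-j) i k (rc2 (F := R) rfl (neg_neg i) (inv (-i) j a)) c)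
  -- (R25)
  r25 : ∀ i j k, adm3 ℓ i j k → ∀ (a : R (-i) j) (b : R j i) (c : R i k),
    dot i k (star i j a b) c =
      star k j (mul (-k) (-i) j (inv i k c) a) (mul j i k b c)
  -- (R26)
  r26 : ∀ i j k, adm3 ℓ i j k → ∀ (u : Δ i) (a : R i j) (b : R j k),
    mul (-i) j k (tri i j u a) b = tri i k u (mul i j k a b)
  -- (R27)
  r27 : ∀ i j k, adm3 ℓ i j k → ∀ (u : Δ i) (a : R i j) (b : R j k),
    tri j k (-(dot i j u a)) b =
      mul (-j) i k (rc2 (F := R) rfl (neg_neg i) (inv (-i) j (tri i j u a)))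
        (mul i j k a b)
  -- (R28)
  r28 : ∀ i j k, adm3 ℓ i j k → ∀ (u : Δ i) (a : R i j) (b : R j k),
    dot j k (dot i j u a) b = dot i k u (mul i j k a b)

attribute [instance] PGOFR.instR PGOFR.instΔ

namespace PGOFR

variable {ℓ : ℕ}

/-- Condition (R29). -/
def cond29 (o : PGOFR ℓ) : Prop :=
  ∀ i j k, adm3 ℓ i j k →
    AddSubgroup.closure
      ({x : o.R i j | ∃ a b, x = o.mul i k j a b} ∪
       {x : o.R i j | ∃ a b, x = o.mul i (-k) j a b}) = ⊤

/-- Condition (R30). -/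
def cond30 (o : PGOFR ℓ) : Prop :=
  ∀ i j, adm2 ℓ i j →
    AddSubgroup.closure
      ({x : o.Δ i | ∃ u a, x = o.dot j i u a} ∪
       {x : o.Δ i | ∃ u a, x = o.dot (-j) i u a} ∪
       {x : o.Δ i | ∃ a b, x = o.star i j a b}) = ⊤

/-- Associativity condition (A1). -/
def condA1 (o : PGOFR ℓ) : Prop :=
  ∀ i j k l m n : ℤ, adm3 ℓ i j k → |i| = |m| → |j| = |l| → |k| = |n| →
    ∀ (a : o.R i j) (b : o.R j k) (c : o.R k l) (d : o.R l m) (e : o.R m n),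
      o.mul i j n a (o.mul j m n (o.mul j k m b (o.mul k l m c d)) e) =
      o.mul i l n (o.mul i k l (o.mul i j k a b) c) (o.mul l m n d e)

/-- Associativity condition (A2). -/
def condA2 (o : PGOFR ℓ) : Prop :=
  ∀ i j k l m n : ℤ, adm3 ℓ i j k → |i| = |l| → |j| = |n| → |k| = |m| →
    ∀ (a : o.R i j) (b : o.R j k) (c : o.R k l) (d : o.R l m) (e : o.R m n),
      o.mul i k n (o.mul i j k a b) (o.mul k l n c (o.mul l m n d e)) =
      o.mul i m n (o.mul i l m (o.mul i j l a (o.mul j k l b c)) d) e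

/-- Associativity condition (A3). -/
def condA3 (o : PGOFR ℓ) : Prop :=
  ∀ i j k l m n : ℤ, adm3 ℓ i j l → |i| = |k| → |j| = |m| → |l| = |n| →
    ∀ (a : o.R i j) (b : o.R j k) (c : o.R k l) (d : o.R l m) (e : o.R m n),
      o.mul i m n (o.mul i l m (o.mul i j l a (o.mul j k l b c)) d) e =
      o.mul i j n a (o.mul j k n b (o.mul k m n (o.mul k l m c d) e))

/-- Associativity condition (A4). -/
def condA4 (o : PGOFR ℓ) : Prop :=
  ∀ i j k l m n : ℤ, adm3 ℓ i j k → |i| = |l| → |j| = |m| → |k| = |n| →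
    ∀ (a : o.R i j) (b : o.R j k) (c : o.R k l) (d : o.R l m) (e : o.R m n),
      o.mul i m n (o.mul i k m (o.mul i j k a b) (o.mul k l m c d)) e =
      o.mul i j n a (o.mul j l n (o.mul j k l b c) (o.mul l m n d e))

end PGOFR
namespace PGOFR

/-- The subgroup `D_i^min = ⟨R_{-i,j} ∗ R_{ji} : j⟩` of `Δ i`. -/
def Dmin {ℓ : ℕ} (o : PGOFR ℓ) (i : ℤ) : AddSubgroup (o.Δ i) :=
  AddSubgroup.closure {x | ∃ j, adm2 ℓ i j ∧ ∃ a b, x = o.star i j a b}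

end PGOFR
/-- The structure of a partial graded odd form `K`-algebra on a partial graded
odd form ring: `K`-module structures on the `R i j`, 2-step nilpotent
`K`-module structures on the `Δ i` with nilpotent filtrations `D i`, and the
identities (R31)–(R41). -/
structure PGOFAlgStr (K : Type) [CommRing K] {ℓ : ℕ} (o : PGOFR ℓ) where
  -- the R i j are K-modules
  commR : ∀ i j, adm2 ℓ i j → ∀ a b : o.R i j, a + b = b + a
  smulR : ∀ i j, K → o.R i j → o.R i j
  smulR_add : ∀ i j, adm2 ℓ i j → ∀ (k : K) (a b : o.R i j),
    smulR i j k (a + b) = smulR i j k a + smulR i j k b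
  add_smulR : ∀ i j, adm2 ℓ i j → ∀ (k k' : K) (a : o.R i j),
    smulR i j (k + k') a = smulR i j k a + smulR i j k' a
  mul_smulR : ∀ i j, adm2 ℓ i j → ∀ (k k' : K) (a : o.R i j),
    smulR i j (k * k') a = smulR i j k (smulR i j k' a)
  one_smulR : ∀ i j, adm2 ℓ i j → ∀ a : o.R i j, smulR i j 1 a = a
  -- the Δ i are 2-step nilpotent K-modules with nilpotent filtration D i
  actK : ∀ i, o.Δ i → K → o.Δ i
  actK_add : ∀ i, adm ℓ i → ∀ (u v : o.Δ i) (k : K),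
    actK i (u + v) k = actK i u k + actK i v k
  actK_one : ∀ i, adm ℓ i → ∀ u : o.Δ i, actK i u 1 = u
  actK_mul : ∀ i, adm ℓ i → ∀ (u : o.Δ i) (k k' : K),
    actK i (actK i u k) k' = actK i u (k * k')
  D : ∀ i, AddSubgroup (o.Δ i)
  D_central : ∀ i, adm ℓ i → ∀ v ∈ D i, ∀ u : o.Δ i, u + v = v + u
  D_comm : ∀ i, adm ℓ i → ∀ u v : o.Δ i, u + v - u - v ∈ D i
  smulD : ∀ i, K → o.Δ i → o.Δ i
  smulD_mem : ∀ i, adm ℓ i → ∀ (k : K), ∀ v ∈ D i, smulD i k v ∈ D i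
  smulD_add : ∀ i, adm ℓ i → ∀ (k : K), ∀ v ∈ D i, ∀ w ∈ D i,
    smulD i k (v + w) = smulD i k v + smulD i k w
  add_smulD : ∀ i, adm ℓ i → ∀ (k k' : K), ∀ v ∈ D i,
    smulD i (k + k') v = smulD i k v + smulD i k' v
  mul_smulD : ∀ i, adm ℓ i → ∀ (k k' : K), ∀ v ∈ D i,
    smulD i (k * k') v = smulD i k (smulD i k' v)
  one_smulD : ∀ i, adm ℓ i → ∀ v ∈ D i, smulD i 1 v = v
  actK_comm : ∀ i, adm ℓ i → ∀ (u v : o.Δ i) (k k' : K),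
    actK i u k + actK i v k' - actK i u k - actK i v k' =
      smulD i (k * k') (u + v - u - v)
  τ : ∀ i, o.Δ i → o.Δ i
  τ_mem : ∀ i, adm ℓ i → ∀ u : o.Δ i, τ i u ∈ D i
  actK_add_scalar : ∀ i, adm ℓ i → ∀ (u : o.Δ i) (k k' : K),
    actK i u (k + k') = actK i u k + smulD i (k * k') (τ i u) + actK i u k'
  actK_D : ∀ i, adm ℓ i → ∀ v ∈ D i, ∀ k : K, actK i v k = smulD i (k * k) v
  -- (R31)
  r31 : ∀ i j, adm2 ℓ i j → ∀ v ∈ D i, ∀ u : o.Δ j, o.circ i j v u = 0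
  -- (R32)
  r32 : ∀ i j, adm2 ℓ i j → ∀ (a : o.R (-i) j) (b : o.R j i), o.star i j a b ∈ D i
  -- (R33)
  r33 : ∀ i j, adm2 ℓ i j → ∀ v ∈ D i, ∀ a : o.R i j, o.dot i j v a ∈ D j
  -- (R34)
  r34 : ∀ i j, adm2 ℓ i j → ∀ (k : K) (a : o.R i j),
    o.inv i j (smulR i j k a) = smulR (-j) (-i) k (o.inv i j a)
  -- (R35)
  r35l : ∀ i j k, adm3 ℓ i j k → ∀ (c : K) (a : o.R i j) (b : o.R j k),
    o.mul i j k (smulR i j c a) b = smulR i k c (o.mul i j k a b)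
  r35r : ∀ i j k, adm3 ℓ i j k → ∀ (c : K) (a : o.R i j) (b : o.R j k),
    o.mul i j k a (smulR j k c b) = smulR i k c (o.mul i j k a b)
  -- (R36)
  r36l : ∀ i j, adm2 ℓ i j → ∀ (c : K) (a : o.R (-i) j) (b : o.R j i),
    o.star i j (smulR (-i) j c a) b = smulD i c (o.star i j a b)
  r36r : ∀ i j, adm2 ℓ i j → ∀ (c : K) (a : o.R (-i) j) (b : o.R j i),
    o.star i j a (smulR j i c b) = smulD i c (o.star i j a b)
  -- (R37)
  r37l : ∀ i j, adm2 ℓ i j → ∀ (c : K) (u : o.Δ i) (v : o.Δ j),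
    o.circ i j (actK i u c) v = smulR (-i) j c (o.circ i j u v)
  r37r : ∀ i j, adm2 ℓ i j → ∀ (c : K) (u : o.Δ i) (v : o.Δ j),
    o.circ i j u (actK j v c) = smulR (-i) j c (o.circ i j u v)
  -- (R38)
  r38l : ∀ i j, adm2 ℓ i j → ∀ (c : K) (u : o.Δ i) (a : o.R i j),
    o.tri i j (actK i u c) a = smulR (-i) j (c * c) (o.tri i j u a)
  r38r : ∀ i j, adm2 ℓ i j → ∀ (c : K) (u : o.Δ i) (a : o.R i j),
    o.tri i j u (smulR i j c a) = smulR (-i) j c (o.tri i j u a)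
  -- (R39)
  r39 : ∀ i j, adm2 ℓ i j → ∀ (c : K), ∀ v ∈ D i, ∀ a : o.R i j,
    o.tri i j (smulD i c v) a = smulR (-i) j c (o.tri i j v a)
  -- (R40)
  r40l : ∀ i j, adm2 ℓ i j → ∀ (c : K) (u : o.Δ i) (a : o.R i j),
    o.dot i j (actK i u c) a = o.dot i j u (smulR i j c a)
  r40r : ∀ i j, adm2 ℓ i j → ∀ (c : K) (u : o.Δ i) (a : o.R i j),
    actK j (o.dot i j u a) c = o.dot i j u (smulR i j c a)
  -- (R41)
  r41 : ∀ i j, adm2 ℓ i j → ∀ (c : K), ∀ v ∈ D i, ∀ a : o.R i j,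
    o.dot i j (smulD i c v) a = smulD j c (o.dot i j v a)
section CmtTools
variable {G : Type*} [AddGroup G]

/-- The additive commutator. -/
def cmt (a b : G) : G := a + b - a - b

lemma cmt_spec (a b : G) : a + b = cmt a b + (b + a) := by
  simp [cmt, sub_eq_add_neg, add_assoc]

lemma cmt_zero_left (b : G) : cmt (0 : G) b = 0 := by simp [cmt]
lemma cmt_zero_right (a : G) : cmt a (0 : G) = 0 := by simp [cmt]
lemma cmt_self (a : G) : cmt a a = 0 := by simp [cmt]

lemma cmt_antisymm (a b : G) : cmt a b = - cmt b a := by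
  simp [cmt, sub_eq_add_neg, add_assoc]

lemma cmt_eq_zero_iff {a b : G} : cmt a b = 0 ↔ a + b = b + a := by
  constructor
  · intro h; rw [cmt_spec a b, h, zero_add]
  · intro h; simp [cmt, h, sub_eq_add_neg, add_assoc]

/-- `x + y = y + x + [x,y]` when the commutator is central. -/
lemma cmt_swap (hc : ∀ z : G, ∀ a b, cmt a b + z = z + cmt a b) (x y : G) :
    x + y = y + x + cmt x y := by
  rw [cmt_spec x y, hc (y + x) x y]

variable (hc : ∀ z : G, ∀ a b, cmt a b + z = z + cmt a b)

section
include hc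

lemma cmt_add_left (a b v : G) : cmt (a + b) v = cmt a v + cmt b v := by
  have h1 : b + v - b = v + cmt b v := by
    rw [cmt_spec b v, hc (v+b) b v, add_assoc v b (cmt b v), ← hc b b v]
    simp [sub_eq_add_neg, add_assoc]
  have h2 : cmt (a + b) v = a + (b + v - b) - a - v := by
    simp [cmt, sub_eq_add_neg, add_assoc]
  rw [h2, h1, ← add_assoc, ← hc (a + v) b v]
  have h3 : cmt b v + (a + v) - a - v = cmt b v + cmt a v := by
    simp [cmt, sub_eq_add_neg, add_assoc]
  rw [h3, hc (cmt b v) a v]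

lemma cmt_add_right (a u v : G) : cmt a (u + v) = cmt a u + cmt a v := by
  rw [cmt_antisymm a (u+v), cmt_add_left hc, neg_add_rev, ← cmt_antisymm,
    ← cmt_antisymm, hc (cmt a u) a v]

lemma cmt_neg_left (a v : G) : cmt (-a) v = - cmt a v := by
  have := cmt_add_left hc (-a) a v
  rw [neg_add_cancel, cmt_zero_left] at this
  rw [eq_neg_iff_add_eq_zero]; exact this.symm

lemma cmt_neg_right (a v : G) : cmt a (-v) = - cmt a v := by
  rw [cmt_antisymm a (-v), cmt_neg_left hc, neg_neg]; exact cmt_antisymm v a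

lemma cmt_zsmul_left (n : ℤ) (a v : G) : cmt (n • a) v = n • cmt a v := by
  induction n using Int.induction_on with
  | zero => simp [cmt_zero_left]
  | succ k ih => rw [add_zsmul, one_zsmul, cmt_add_left hc, ih, add_zsmul, one_zsmul]
  | pred k ih =>
    rw [show (-(k:ℤ) - 1) = (-(k:ℤ)) + (-1) by ring, add_zsmul, add_zsmul,
      cmt_add_left hc, ih, neg_one_zsmul, cmt_neg_left hc, neg_one_zsmul]

lemma cmt_zsmul_right (n : ℤ) (a v : G) : cmt a (n • v) = n • cmt a v := by
  rw [cmt_antisymm, cmt_zsmul_left hc, ← zsmul_neg, ← cmt_antisymm]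

end
end CmtTools

/-- Linear combinations of two commuting elements add componentwise. -/
lemma lin2 {G : Type*} [AddGroup G] {x y : G} (h : AddCommute x y) (p q p' q' : ℤ) :
    (p • x + q • y) + (p' • x + q' • y) = (p + p') • x + (q + q') • y := by
  have hc : AddCommute (q • y) (p' • x) := (h.symm.zsmul_zsmul q p')
  calc (p • x + q • y) + (p' • x + q' • y)
      = p • x + (q • y + p' • x) + q' • y := by simp [add_assoc]
    _ = p • x + (p' • x + q • y) + q' • y := by rw [hc]
    _ = (p + p') • x + (q + q') • y := by
        rw [add_zsmul, add_zsmul]; simp [add_assoc]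

lemma zsmul_add_of_comm {G : Type*} [AddGroup G] {x y : G} (h : AddCommute x y) (n : ℤ) :
    n • (x + y) = n • x + n • y := h.zsmul_add n

section IndexLemmas
variable {ℓ : ℕ} {i j k : ℤ}

lemma adm_neg (h : adm ℓ i) : adm ℓ (-i) :=
  ⟨neg_ne_zero.mpr h.1, by rw [abs_neg]; exact h.2⟩

lemma adm2_symm (h : adm2 ℓ i j) : adm2 ℓ j i := ⟨h.2.1, h.1, h.2.2.symm⟩

lemma adm2_neg_left (h : adm2 ℓ i j) : adm2 ℓ (-i) j :=
  ⟨adm_neg h.1, h.2.1, by rw [abs_neg]; exact h.2.2⟩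

lemma adm2_neg_right (h : adm2 ℓ i j) : adm2 ℓ i (-j) :=
  ⟨h.1, adm_neg h.2.1, by rw [abs_neg]; exact h.2.2⟩

lemma adm3_mk (h1 : adm ℓ i) (h2 : adm ℓ j) (h3 : adm ℓ k)
    (h4 : |i| ≠ |j|) (h5 : |i| ≠ |k|) (h6 : |j| ≠ |k|) : adm3 ℓ i j k :=
  ⟨h1, h2, h3, h4, h5, h6⟩

lemma adm3_12 (h : adm3 ℓ i j k) : adm2 ℓ i j := ⟨h.1, h.2.1, h.2.2.2.1⟩
lemma adm3_13 (h : adm3 ℓ i j k) : adm2 ℓ i k := ⟨h.1, h.2.2.1, h.2.2.2.2.1⟩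
lemma adm3_23 (h : adm3 ℓ i j k) : adm2 ℓ j k := ⟨h.2.1, h.2.2.1, h.2.2.2.2.2⟩

lemma adm3_perm132 (h : adm3 ℓ i j k) : adm3 ℓ i k j :=
  ⟨h.1, h.2.2.1, h.2.1, h.2.2.2.2.1, h.2.2.2.1, h.2.2.2.2.2.symm⟩
lemma adm3_perm213 (h : adm3 ℓ i j k) : adm3 ℓ j i k :=
  ⟨h.2.1, h.1, h.2.2.1, h.2.2.2.1.symm, h.2.2.2.2.2, h.2.2.2.2.1⟩
lemma adm3_perm231 (h : adm3 ℓ i j k) : adm3 ℓ j k i :=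
  adm3_perm132 (adm3_perm213 h)
lemma adm3_perm312 (h : adm3 ℓ i j k) : adm3 ℓ k i j :=
  adm3_perm213 (adm3_perm132 h)
lemma adm3_perm321 (h : adm3 ℓ i j k) : adm3 ℓ k j i :=
  adm3_perm132 (adm3_perm312 h)

lemma adm3_neg1 (h : adm3 ℓ i j k) : adm3 ℓ (-i) j k :=
  ⟨adm_neg h.1, h.2.1, h.2.2.1, by rw [abs_neg]; exact h.2.2.2.1,
    by rw [abs_neg]; exact h.2.2.2.2.1, h.2.2.2.2.2⟩
lemma adm3_neg2 (h : adm3 ℓ i j k) : adm3 ℓ i (-j) k :=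
  adm3_perm213 (adm3_neg1 (adm3_perm213 h))
lemma adm3_neg3 (h : adm3 ℓ i j k) : adm3 ℓ i j (-k) :=
  adm3_perm132 (adm3_neg2 (adm3_perm132 h))

lemma exists_avoid (hl : 3 ≤ ℓ) (A B : ℤ) :
    ∃ k : ℤ, adm ℓ k ∧ |k| ≠ A ∧ |k| ≠ B := by
  have h1 : ((1:ℤ)) ≤ (ℓ:ℤ) := by exact_mod_cast (by omega : 1 ≤ ℓ)
  have h2 : ((2:ℤ)) ≤ (ℓ:ℤ) := by exact_mod_cast (by omega : 2 ≤ ℓ)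
  have h3 : ((3:ℤ)) ≤ (ℓ:ℤ) := by exact_mod_cast hl
  rcases eq_or_ne A 1 with rfl | hA1
  · rcases eq_or_ne B 2 with rfl | hB2
    · exact ⟨3, ⟨by norm_num, by rwa [show |(3:ℤ)| = 3 by norm_num]⟩,
        by norm_num, by norm_num⟩
    · exact ⟨2, ⟨by norm_num, by rwa [show |(2:ℤ)| = 2 by norm_num]⟩,
        by norm_num, by rw [show |(2:ℤ)| = 2 by norm_num]; exact Ne.symm hB2⟩
  · rcases eq_or_ne B 1 with rfl | hB1
    · rcases eq_or_ne A 2 with rfl | hA2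
      · exact ⟨3, ⟨by norm_num, by rwa [show |(3:ℤ)| = 3 by norm_num]⟩,
          by norm_num, by norm_num⟩
      · exact ⟨2, ⟨by norm_num, by rwa [show |(2:ℤ)| = 2 by norm_num]⟩,
          by rw [show |(2:ℤ)| = 2 by norm_num]; exact Ne.symm hA2, by norm_num⟩
    · exact ⟨1, ⟨by norm_num, by rwa [show |(1:ℤ)| = 1 by norm_num]⟩,
        by rw [show |(1:ℤ)| = 1 by norm_num]; exact Ne.symm hA1,
        by rw [show |(1:ℤ)| = 1 by norm_num]; exact Ne.symm hB1⟩

lemma exists_third (hl : 3 ≤ ℓ) (h : adm2 ℓ i j) : ∃ k, adm3 ℓ i j k := by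
  obtain ⟨k, hk, hki, hkj⟩ := exists_avoid hl |i| |j|
  exact ⟨k, h.1, h.2.1, hk, h.2.2, hki.symm, hkj.symm⟩

lemma exists_partner (hl : 3 ≤ ℓ) (h : adm ℓ i) : ∃ j, adm2 ℓ i j := by
  obtain ⟨k, hk, hki, _⟩ := exists_avoid hl |i| |i|
  exact ⟨k, h, hk, hki.symm⟩

end IndexLemmas
namespace Stmt16

/-- All ambient hypotheses of Statement 16, bundled. -/
structure Ctx (ℓ : ℕ) where
  o : PGOFR ℓ
  hl : 3 ≤ ℓ
  h29 : o.cond29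
  h30 : o.cond30
  neg1 : ∀ i, o.Δ i → o.Δ i
  hneg1_add : ∀ i, adm ℓ i → ∀ u v : o.Δ i, neg1 i (u + v) = neg1 i u + neg1 i v
  hneg1_star : ∀ i j, adm2 ℓ i j → ∀ (a : o.R (-i) j) (b : o.R j i),
    neg1 i (o.star i j a b) = o.star i j a b
  hneg1_dot : ∀ i j, adm2 ℓ i j → ∀ (u : o.Δ j) (b : o.R j i),
    neg1 i (o.dot j i u b) = o.dot j i u (-b)

namespace Ctx

variable {ℓ : ℕ} (C : Ctx ℓ)

/-- `R i j` is abelian. -/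
lemma addcommR {i j : ℤ} (hij : adm2 ℓ i j) (a b : C.o.R i j) : a + b = b + a := by
  obtain ⟨k, hk⟩ := exists_third C.hl hij
  have hcl : AddSubgroup.closure
      ({x : C.o.R i j | ∃ a b, x = C.o.mul i k j a b} ∪
       {x : C.o.R i j | ∃ a b, x = C.o.mul i (-k) j a b}) ≤
      AddSubgroup.center (C.o.R i j) := by
    rw [AddSubgroup.closure_le]
    rintro x (⟨a', b', rfl⟩ | ⟨a', b', rfl⟩)
    · exact AddSubgroup.mem_center_iff.mpr
        (fun g => (C.o.r1 i k j (adm3_perm132 hk) a' b' g).symm)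
    · exact AddSubgroup.mem_center_iff.mpr
        (fun g => (C.o.r1 i (-k) j (adm3_neg2 (adm3_perm132 hk)) a' b' g).symm)
  have ha : a ∈ AddSubgroup.center (C.o.R i j) := by
    apply hcl
    rw [C.h29 i j k hk]; trivial
  exact (AddSubgroup.mem_center_iff.mp ha b).symm

lemma addCommuteR {i j : ℤ} (hij : adm2 ℓ i j) (a b : C.o.R i j) : AddCommute a b :=
  C.addcommR hij a b

lemma zsmulR_add {i j : ℤ} (hij : adm2 ℓ i j) (n : ℤ) (a b : C.o.R i j) :
    n • (a + b) = n • a + n • b :=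
  (C.addCommuteR hij a b).zsmul_add n

lemma zsmulR_sub {i j : ℤ} (hij : adm2 ℓ i j) (n : ℤ) (a b : C.o.R i j) :
    n • (a - b) = n • a - n • b := by
  rw [sub_eq_add_neg, C.zsmulR_add hij, zsmul_neg, sub_eq_add_neg]

/-- The involution as an additive homomorphism. -/
def invHom {i j : ℤ} (hij : adm2 ℓ i j) : C.o.R i j →+ C.o.R (-j) (-i) :=
  AddMonoidHom.mk' (C.o.inv i j) (fun a b => by
    rw [C.o.inv_add i j hij a b]
    exact C.addcommR (adm2_neg_left (adm2_neg_right (adm2_symm hij))) _ _)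

lemma inv_zero {i j : ℤ} (hij : adm2 ℓ i j) : C.o.inv i j 0 = 0 :=
  (C.invHom hij).map_zero

lemma inv_neg {i j : ℤ} (hij : adm2 ℓ i j) (a : C.o.R i j) :
    C.o.inv i j (-a) = - C.o.inv i j a :=
  (C.invHom hij).map_neg a

lemma inv_zsmul {i j : ℤ} (hij : adm2 ℓ i j) (n : ℤ) (a : C.o.R i j) :
    C.o.inv i j (n • a) = n • C.o.inv i j a :=
  (C.invHom hij).map_zsmul n a

/-- Left multiplication as a homomorphism. -/
def mulLHom {i j k : ℤ} (h : adm3 ℓ i j k) (b : C.o.R j k) : C.o.R i j →+ C.o.R i k :=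
  AddMonoidHom.mk' (fun a => C.o.mul i j k a b) (fun a a' => C.o.r2 i j k h a a' b)

def mulRHom {i j k : ℤ} (h : adm3 ℓ i j k) (a : C.o.R i j) : C.o.R j k →+ C.o.R i k :=
  AddMonoidHom.mk' (fun b => C.o.mul i j k a b) (fun b b' => C.o.r3 i j k h a b b')

lemma mul_zero_left {i j k : ℤ} (h : adm3 ℓ i j k) (b : C.o.R j k) :
    C.o.mul i j k 0 b = 0 := (C.mulLHom h b).map_zero

lemma mul_zero_right {i j k : ℤ} (h : adm3 ℓ i j k) (a : C.o.R i j) :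
    C.o.mul i j k a 0 = 0 := (C.mulRHom h a).map_zero

lemma mul_neg_left {i j k : ℤ} (h : adm3 ℓ i j k) (a : C.o.R i j) (b : C.o.R j k) :
    C.o.mul i j k (-a) b = - C.o.mul i j k a b := (C.mulLHom h b).map_neg a

lemma mul_neg_right {i j k : ℤ} (h : adm3 ℓ i j k) (a : C.o.R i j) (b : C.o.R j k) :
    C.o.mul i j k a (-b) = - C.o.mul i j k a b := (C.mulRHom h a).map_neg b

lemma mul_zsmul_left {i j k : ℤ} (h : adm3 ℓ i j k) (n : ℤ) (a : C.o.R i j) (b : C.o.R j k) :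
    C.o.mul i j k (n • a) b = n • C.o.mul i j k a b := (C.mulLHom h b).map_zsmul n a

lemma mul_zsmul_right {i j k : ℤ} (h : adm3 ℓ i j k) (n : ℤ) (a : C.o.R i j) (b : C.o.R j k) :
    C.o.mul i j k a (n • b) = n • C.o.mul i j k a b := (C.mulRHom h a).map_zsmul n b

def starLHom {i j : ℤ} (hij : adm2 ℓ i j) (b : C.o.R j i) : C.o.R (-i) j →+ C.o.Δ i :=
  AddMonoidHom.mk' (fun a => C.o.star i j a b) (fun a a' => C.o.r6 i j hij a a' b)

def starRHom {i j : ℤ} (hij : adm2 ℓ i j) (a : C.o.R (-i) j) : C.o.R j i →+ C.o.Δ i :=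
  AddMonoidHom.mk' (fun b => C.o.star i j a b) (fun b b' => C.o.r7 i j hij a b b')

lemma star_zero_left {i j : ℤ} (hij : adm2 ℓ i j) (b : C.o.R j i) :
    C.o.star i j 0 b = 0 := (C.starLHom hij b).map_zero

lemma star_zero_right {i j : ℤ} (hij : adm2 ℓ i j) (a : C.o.R (-i) j) :
    C.o.star i j a 0 = 0 := (C.starRHom hij a).map_zero

lemma star_neg_left {i j : ℤ} (hij : adm2 ℓ i j) (a : C.o.R (-i) j) (b : C.o.R j i) :
    C.o.star i j (-a) b = - C.o.star i j a b := (C.starLHom hij b).map_neg a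

lemma star_neg_right {i j : ℤ} (hij : adm2 ℓ i j) (a : C.o.R (-i) j) (b : C.o.R j i) :
    C.o.star i j a (-b) = - C.o.star i j a b := (C.starRHom hij a).map_neg b

lemma star_zsmul_left {i j : ℤ} (hij : adm2 ℓ i j) (n : ℤ) (a : C.o.R (-i) j) (b : C.o.R j i) :
    C.o.star i j (n • a) b = n • C.o.star i j a b := (C.starLHom hij b).map_zsmul n a

lemma star_zsmul_right {i j : ℤ} (hij : adm2 ℓ i j) (n : ℤ) (a : C.o.R (-i) j) (b : C.o.R j i) :
    C.o.star i j a (n • b) = n • C.o.star i j a b := (C.starRHom hij a).map_zsmul n b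

def circLHom {i j : ℤ} (hij : adm2 ℓ i j) (v : C.o.Δ j) : C.o.Δ i →+ C.o.R (-i) j :=
  AddMonoidHom.mk' (fun u => C.o.circ i j u v) (fun u u' => C.o.r10 i j hij u u' v)

def circRHom {i j : ℤ} (hij : adm2 ℓ i j) (u : C.o.Δ i) : C.o.Δ j →+ C.o.R (-i) j :=
  AddMonoidHom.mk' (fun v => C.o.circ i j u v) (fun v v' => C.o.r11 i j hij u v v')

lemma circ_zero_left {i j : ℤ} (hij : adm2 ℓ i j) (v : C.o.Δ j) :
    C.o.circ i j 0 v = 0 := (C.circLHom hij v).map_zero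

lemma circ_zero_right {i j : ℤ} (hij : adm2 ℓ i j) (u : C.o.Δ i) :
    C.o.circ i j u 0 = 0 := (C.circRHom hij u).map_zero

lemma circ_neg_left {i j : ℤ} (hij : adm2 ℓ i j) (u : C.o.Δ i) (v : C.o.Δ j) :
    C.o.circ i j (-u) v = - C.o.circ i j u v := (C.circLHom hij v).map_neg u

lemma circ_neg_right {i j : ℤ} (hij : adm2 ℓ i j) (u : C.o.Δ i) (v : C.o.Δ j) :
    C.o.circ i j u (-v) = - C.o.circ i j u v := (C.circRHom hij u).map_neg v

lemma circ_zsmul_left {i j : ℤ} (hij : adm2 ℓ i j) (n : ℤ) (u : C.o.Δ i) (v : C.o.Δ j) :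
    C.o.circ i j (n • u) v = n • C.o.circ i j u v := (C.circLHom hij v).map_zsmul n u

lemma circ_zsmul_right {i j : ℤ} (hij : adm2 ℓ i j) (n : ℤ) (u : C.o.Δ i) (v : C.o.Δ j) :
    C.o.circ i j u (n • v) = n • C.o.circ i j u v := (C.circRHom hij u).map_zsmul n v

def triRHom {i j : ℤ} (hij : adm2 ℓ i j) (u : C.o.Δ i) : C.o.R i j →+ C.o.R (-i) j :=
  AddMonoidHom.mk' (fun a => C.o.tri i j u a) (fun a a' => C.o.r17 i j hij u a a')

lemma tri_zero_right {i j : ℤ} (hij : adm2 ℓ i j) (u : C.o.Δ i) :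
    C.o.tri i j u 0 = 0 := (C.triRHom hij u).map_zero

lemma tri_neg_right {i j : ℤ} (hij : adm2 ℓ i j) (u : C.o.Δ i) (a : C.o.R i j) :
    C.o.tri i j u (-a) = - C.o.tri i j u a := (C.triRHom hij u).map_neg a

lemma tri_zsmul_right {i j : ℤ} (hij : adm2 ℓ i j) (n : ℤ) (u : C.o.Δ i) (a : C.o.R i j) :
    C.o.tri i j u (n • a) = n • C.o.tri i j u a := (C.triRHom hij u).map_zsmul n a

def dotLHom {i j : ℤ} (hij : adm2 ℓ i j) (a : C.o.R i j) : C.o.Δ i →+ C.o.Δ j :=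
  AddMonoidHom.mk' (fun u => C.o.dot i j u a) (fun u u' => C.o.r15 i j hij u u' a)

lemma dot_zero_left {i j : ℤ} (hij : adm2 ℓ i j) (a : C.o.R i j) :
    C.o.dot i j 0 a = 0 := (C.dotLHom hij a).map_zero

lemma dot_neg_left {i j : ℤ} (hij : adm2 ℓ i j) (u : C.o.Δ i) (a : C.o.R i j) :
    C.o.dot i j (-u) a = - C.o.dot i j u a := (C.dotLHom hij a).map_neg u

lemma dot_zsmul_left {i j : ℤ} (hij : adm2 ℓ i j) (n : ℤ) (u : C.o.Δ i) (a : C.o.R i j) :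
    C.o.dot i j (n • u) a = n • C.o.dot i j u a := (C.dotLHom hij a).map_zsmul n u

/-- `neg1` as an additive homomorphism. -/
def neg1Hom (i : ℤ) (hi : adm ℓ i) : C.o.Δ i →+ C.o.Δ i :=
  AddMonoidHom.mk' (C.neg1 i) (C.hneg1_add i hi)

lemma neg1_zero (i : ℤ) (hi : adm ℓ i) : C.neg1 i 0 = 0 := (C.neg1Hom i hi).map_zero

lemma neg1_neg (i : ℤ) (hi : adm ℓ i) (u : C.o.Δ i) :
    C.neg1 i (-u) = - C.neg1 i u := (C.neg1Hom i hi).map_neg u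

lemma neg1_zsmul (i : ℤ) (hi : adm ℓ i) (n : ℤ) (u : C.o.Δ i) :
    C.neg1 i (n • u) = n • C.neg1 i u := (C.neg1Hom i hi).map_zsmul n u

end Ctx
end Stmt16
namespace Stmt16
set_option linter.unusedSectionVars false

section Rc2
variable {F : ℤ → ℤ → Type} [inst : ∀ i j, AddGroup (F i j)] {i j i' j' : ℤ}

lemma rc2_zero (hi : i = i') (hj : j = j') : rc2 (F := F) hi hj 0 = 0 := by
  subst hi; subst hj; exact cast_eq _ 0

lemma rc2_self (hi : i = i') (hj : j = j') (a : F i' j')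
    (hi' : i' = i) (hj' : j' = j) : rc2 (F := F) hi hj (rc2 (F := F) hi' hj' a) = a := by
  subst hi; subst hj; simp only [rc2, cast_eq]

lemma rc2_neg (hi : i = i') (hj : j = j') (a : F i j) :
    rc2 (F := F) hi hj (-a) = - rc2 (F := F) hi hj a := by
  subst hi; subst hj; simp only [rc2, cast_eq]

lemma rc2_add (hi : i = i') (hj : j = j') (a b : F i j) :
    rc2 (F := F) hi hj (a + b) = rc2 (F := F) hi hj a + rc2 (F := F) hi hj b := by
  subst hi; subst hj; simp only [rc2, cast_eq]

lemma rc2_zsmul (hi : i = i') (hj : j = j') (n : ℤ) (a : F i j) :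
    rc2 (F := F) hi hj (n • a) = n • rc2 (F := F) hi hj a := by
  subst hi; subst hj; simp only [rc2, cast_eq]

lemma rc2_eq_zero_iff (hi : i = i') (hj : j = j') (a : F i j) :
    rc2 (F := F) hi hj a = 0 ↔ a = 0 := by
  subst hi; subst hj; simp only [rc2, cast_eq]

end Rc2

namespace Ctx

variable {ℓ : ℤ} -- dummy

end Ctx

namespace Ctx

variable {ℓ : ℕ} (C : Ctx ℓ)

/-- If `v ∘ u = 0` then `u ∘ v = 0` (flip along (R12)). -/
lemma circ_flip_zero {i j : ℤ} (hij : adm2 ℓ i j) {u : C.o.Δ i} {v : C.o.Δ j}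
    (h : C.o.circ j i v u = 0) : C.o.circ i j u v = 0 := by
  have h12 := C.o.r12 j i (adm2_symm hij) v u
  rw [h, C.inv_zero (adm2_neg_left (adm2_symm hij)), rc2_zero] at h12
  exact h12.symm

/-- Flipping a `circ` along (R12). -/
lemma circ_flip {i j : ℤ} (hij : adm2 ℓ i j) (u : C.o.Δ i) (v : C.o.Δ j) :
    C.o.circ i j u v =
      rc2 (F := C.o.R) rfl (neg_neg j) (C.o.inv (-j) i (C.o.circ j i v u)) :=
  (C.o.r12 j i (adm2_symm hij) v u).symm

/-- Induction over `Δ i` from condition (R30). -/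
lemma delta_ind {i j0 : ℤ} (hij : adm2 ℓ i j0) {P : C.o.Δ i → Prop}
    (h0 : P 0) (hadd : ∀ u v, P u → P v → P (u + v)) (hneg : ∀ u, P u → P (-u))
    (hdot : ∀ (w : C.o.Δ j0) b, P (C.o.dot j0 i w b))
    (hdot' : ∀ (w : C.o.Δ (-j0)) b, P (C.o.dot (-j0) i w b))
    (hstar : ∀ a b, P (C.o.star i j0 a b)) : ∀ u, P u := by
  intro u
  have hu : u ∈ AddSubgroup.closure
      ({x : C.o.Δ i | ∃ u a, x = C.o.dot j0 i u a} ∪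
       {x : C.o.Δ i | ∃ u a, x = C.o.dot (-j0) i u a} ∪
       {x : C.o.Δ i | ∃ a b, x = C.o.star i j0 a b}) := by
    rw [C.h30 i j0 hij]; trivial
  refine AddSubgroup.closure_induction ?_ h0 (fun a b _ _ => hadd a b)
    (fun a _ => hneg a) hu
  rintro x ((⟨w, b, rfl⟩ | ⟨w, b, rfl⟩) | ⟨a, b, rfl⟩)
  · exact hdot w b
  · exact hdot' w b
  · exact hstar a b

/-- Induction over `R i j` from condition (R29). -/
lemma R_ind {i j k : ℤ} (hk : adm3 ℓ i j k) {P : C.o.R i j → Prop}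
    (h0 : P 0) (hadd : ∀ a b, P a → P b → P (a + b)) (hneg : ∀ a, P a → P (-a))
    (hmul : ∀ a b, P (C.o.mul i k j a b))
    (hmul' : ∀ a b, P (C.o.mul i (-k) j a b)) : ∀ x, P x := by
  intro x
  have hx : x ∈ AddSubgroup.closure
      ({y : C.o.R i j | ∃ a b, y = C.o.mul i k j a b} ∪
       {y : C.o.R i j | ∃ a b, y = C.o.mul i (-k) j a b}) := by
    rw [C.h29 i j k hk]; trivial
  refine AddSubgroup.closure_induction ?_ h0 (fun a b _ _ => hadd a b)
    (fun a _ => hneg a) hx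
  rintro y (⟨a, b, rfl⟩ | ⟨a, b, rfl⟩)
  · exact hmul a b
  · exact hmul' a b

/-- Stars are central in `Δ i`. -/
lemma star_comm {i j : ℤ} (hij : adm2 ℓ i j) (a : C.o.R (-i) j) (b : C.o.R j i)
    (u : C.o.Δ i) : u + C.o.star i j a b = C.o.star i j a b + u :=
  (C.o.r5 i j hij a b u).symm

lemma star_mem_Dmin {i j : ℤ} (hij : adm2 ℓ i j) (a : C.o.R (-i) j) (b : C.o.R j i) :
    C.o.star i j a b ∈ C.o.Dmin i :=
  AddSubgroup.subset_closure ⟨j, hij, a, b, rfl⟩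

lemma Dmin_le_center (i : ℤ) :
    C.o.Dmin i ≤ AddSubgroup.center (C.o.Δ i) := by
  rw [PGOFR.Dmin, AddSubgroup.closure_le]
  rintro x ⟨j, hij, a, b, rfl⟩
  exact AddSubgroup.mem_center_iff.mpr (fun g => (C.o.r5 i j hij a b g).symm)

lemma Dmin_central {i : ℤ} {v : C.o.Δ i} (hv : v ∈ C.o.Dmin i) (u : C.o.Δ i) :
    u + v = v + u :=
  AddSubgroup.mem_center_iff.mp (C.Dmin_le_center i hv) u

/-- Every element of `Dmin i` is a sum of stars through indices avoiding a
prescribed absolute value. -/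
lemma Dmin_reduce {i j : ℤ} (hij : adm2 ℓ i j) :
    C.o.Dmin i ≤ AddSubgroup.closure
      {x : C.o.Δ i | ∃ m, adm2 ℓ i m ∧ |m| ≠ |j| ∧ ∃ a b, x = C.o.star i m a b} := by
  rw [PGOFR.Dmin, AddSubgroup.closure_le]
  rintro x ⟨k, hik, a, b, rfl⟩
  by_cases hkj : |k| = |j|
  · obtain ⟨m, hm⟩ := exists_third C.hl hik
    have hmj : |m| ≠ |j| := by rw [← hkj]; exact hm.2.2.2.2.2.symm
    have h3 : adm3 ℓ (-i) k m := adm3_neg1 hm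
    induction a using C.R_ind h3 with
    | h0 => rw [C.star_zero_left hik]; exact zero_mem _
    | hadd a a' ha ha' => rw [C.o.r6 i k hik a a' b]; exact add_mem ha ha'
    | hneg a ha => rw [C.star_neg_left hik a b]; exact neg_mem ha
    | hmul a1 a2 =>
      rw [C.o.r20 i m k (adm3_perm132 hm) a1 a2 b]
      exact AddSubgroup.subset_closure ⟨m, adm3_13 hm, hmj, _, _, rfl⟩
    | hmul' a1 a2 =>
      rw [C.o.r20 i (-m) k (adm3_neg2 (adm3_perm132 hm)) a1 a2 b]
      exact AddSubgroup.subset_closure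
        ⟨-m, adm2_neg_right (adm3_13 hm), by rw [abs_neg]; exact hmj, _, _, rfl⟩
  · exact AddSubgroup.subset_closure ⟨k, hik, hkj, a, b, rfl⟩

end Ctx
end Stmt16
namespace Stmt16
namespace Ctx
variable {ℓ : ℕ} (C : Ctx ℓ)

lemma Dmin_circ_zero {i j : ℤ} (hij : adm2 ℓ i j) {v : C.o.Δ i}
    (hv : v ∈ C.o.Dmin i) (u : C.o.Δ j) : C.o.circ i j v u = 0 := by
  have hv' := C.Dmin_reduce hij hv
  refine AddSubgroup.closure_induction (p := fun x _ => C.o.circ i j x u = 0)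
    ?_ ?_ ?_ ?_ hv'
  · rintro x ⟨m, him, hmj, a, b, rfl⟩
    refine C.circ_flip_zero hij ?_
    exact C.o.r21 j i m ⟨hij.2.1, hij.1, him.2.1, hij.2.2.symm, hmj.symm, him.2.2⟩ u a b
  · exact C.circ_zero_left hij u
  · intro x y _ _ hx hy
    rw [C.o.r10 i j hij x y u, hx, hy, add_zero]
  · intro x _ hx
    rw [C.circ_neg_left hij x u, hx, neg_zero]

lemma circ_zero_right_of_Dmin {i j : ℤ} (hij : adm2 ℓ i j) {v : C.o.Δ j}
    (hv : v ∈ C.o.Dmin j) (u : C.o.Δ i) : C.o.circ i j u v = 0 :=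
  C.circ_flip_zero hij (C.Dmin_circ_zero (adm2_symm hij) hv u)

lemma Dmin_neg1_fix {i : ℤ} (hi : adm ℓ i) {v : C.o.Δ i}
    (hv : v ∈ C.o.Dmin i) : C.neg1 i v = v := by
  refine AddSubgroup.closure_induction (p := fun x _ => C.neg1 i x = x) ?_ ?_ ?_ ?_ hv
  · rintro x ⟨m, him, a, b, rfl⟩; exact C.hneg1_star i m him a b
  · exact C.neg1_zero i hi
  · intro x y _ _ hx hy; rw [C.hneg1_add i hi x y, hx, hy]
  · intro x _ hx; rw [C.neg1_neg i hi x, hx]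

lemma Dmin_dot_mem {i j : ℤ} (hij : adm2 ℓ i j) {v : C.o.Δ i}
    (hv : v ∈ C.o.Dmin i) (a : C.o.R i j) : C.o.dot i j v a ∈ C.o.Dmin j := by
  have hv' := C.Dmin_reduce hij hv
  refine AddSubgroup.closure_induction (p := fun x _ => C.o.dot i j x a ∈ C.o.Dmin j)
    ?_ ?_ ?_ ?_ hv'
  · rintro x ⟨m, him, hmj, a', b', rfl⟩
    rw [C.o.r25 i m j ⟨hij.1, him.2.1, hij.2.1, him.2.2, hij.2.2, hmj⟩ a' b' a]
    exact C.star_mem_Dmin ⟨hij.2.1, him.2.1, hmj.symm⟩ _ _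
  · show C.o.dot i j 0 a ∈ C.o.Dmin j
    rw [C.dot_zero_left hij a]; exact zero_mem _
  · intro x y _ _ hx hy
    show C.o.dot i j (x + y) a ∈ C.o.Dmin j
    rw [C.o.r15 i j hij x y a]; exact add_mem hx hy
  · intro x _ hx
    show C.o.dot i j (-x) a ∈ C.o.Dmin j
    rw [C.dot_neg_left hij x a]; exact neg_mem hx

lemma Dmin_normal (i : ℤ) : (C.o.Dmin i).Normal := by
  constructor
  intro n hn g
  rw [C.Dmin_central hn g, add_assoc, add_neg_cancel, add_zero]
  exact hn

lemma Dmin_addCommute {i : ℤ} {v : C.o.Δ i} (hv : v ∈ C.o.Dmin i) (u : C.o.Δ i) :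
    AddCommute v u := (C.Dmin_central hv u).symm

lemma star_addCommute {i j : ℤ} (hij : adm2 ℓ i j) (a : C.o.R (-i) j) (b : C.o.R j i)
    (u : C.o.Δ i) : AddCommute (C.o.star i j a b) u := C.o.r5 i j hij a b u

/-- Commutators in `Δ i` lie in `Dmin i`. -/
lemma cmt_mem_Dmin {i : ℤ} (hi : adm ℓ i) (u v : C.o.Δ i) :
    cmt u v ∈ C.o.Dmin i := by
  haveI := C.Dmin_normal i
  obtain ⟨j0, hij0⟩ := exists_partner C.hl hi
  set f := QuotientAddGroup.mk' (C.o.Dmin i) with hf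
  have hdotcase : ∀ j1 : ℤ, adm2 ℓ i j1 → ∀ (w : C.o.Δ j1) (b : C.o.R j1 i),
      f (C.o.dot j1 i w b) ∈ AddSubgroup.center _ := by
    intro j1 hij1 w b
    refine AddSubgroup.mem_center_iff.mpr (fun g => ?_)
    obtain ⟨z, rfl⟩ := QuotientAddGroup.mk'_surjective _ g
    rw [← map_add, ← map_add]
    have h14 := C.o.r14 j1 i (adm2_symm hij1) w b z
    rw [QuotientAddGroup.mk'_eq_mk']
    refine ⟨- C.o.star i (-j1) (C.o.inv j1 i b) (C.o.circ j1 i w z), ?_, ?_⟩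
    · exact neg_mem (C.star_mem_Dmin (adm2_neg_right hij1) _ _)
    · rw [h14, sub_eq_add_neg]
  have hcen : ∀ w : C.o.Δ i, f w ∈ AddSubgroup.center _ := by
    refine C.delta_ind hij0 ?_ ?_ ?_ ?_ ?_ ?_
    · rw [map_zero]; exact zero_mem _
    · intro a b ha hb; rw [map_add]; exact add_mem ha hb
    · intro a ha; rw [map_neg]; exact neg_mem ha
    · exact hdotcase j0 hij0
    · exact hdotcase (-j0) (adm2_neg_right hij0)
    · intro a b
      have : f (C.o.star i j0 a b) = 0 :=
        (QuotientAddGroup.eq_zero_iff _).mpr (C.star_mem_Dmin hij0 a b)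
      rw [this]; exact zero_mem _
  have h0 : f (cmt u v) = 0 := by
    have : f (cmt u v) = cmt (f u) (f v) := by
      simp [cmt, map_add, map_sub]
    rw [this, cmt_eq_zero_iff.mpr]
    exact AddSubgroup.mem_center_iff.mp (hcen v) (f u)
  have hker := QuotientAddGroup.ker_mk' (C.o.Dmin i)
  rw [← hker]
  exact h0

end Ctx
end Stmt16
namespace Stmt16
namespace Ctx
variable {ℓ : ℕ} (C : Ctx ℓ)

lemma hcD {i : ℤ} (hi : adm ℓ i) :
    ∀ z a b : C.o.Δ i, cmt a b + z = z + cmt a b :=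
  fun z a b => (C.Dmin_addCommute (C.cmt_mem_Dmin hi a b) z).eq

lemma tri_zero_left {i j : ℤ} (hij : adm2 ℓ i j) (a : C.o.R i j) :
    C.o.tri i j 0 a = 0 := by
  have h := C.o.r16 i j hij 0 0 a
  rw [add_zero, C.circ_zero_left hij, add_zero] at h
  exact add_eq_right.mp h.symm

lemma dot_zero_right {i j : ℤ} (hij : adm2 ℓ i j) (u : C.o.Δ i) :
    C.o.dot i j u 0 = 0 := by
  have h := C.o.r18 i j hij u 0 0
  rw [add_zero, C.inv_zero hij, C.star_zero_left (adm2_neg_right (adm2_symm hij)),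
    add_zero] at h
  exact add_eq_right.mp h.symm

lemma dot_add_dot_neg {i j : ℤ} (hij : adm2 ℓ i j) (u : C.o.Δ i) (a : C.o.R i j) :
    C.o.dot i j u a + C.o.dot i j u (-a) =
      C.o.star j (-i) (C.o.inv i j a) (C.o.tri i j u a) := by
  have h := C.o.r18 i j hij u a (-a)
  rw [add_neg_cancel, C.dot_zero_right hij, C.inv_neg hij,
    C.star_neg_left (adm2_neg_right (adm2_symm hij))] at h
  have hC : AddCommute (-(C.o.star j (-i) (C.o.inv i j a) (C.o.tri i j u a)))
      (C.o.dot i j u (-a)) :=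
    (C.star_addCommute (adm2_neg_right (adm2_symm hij)) _ _ _).neg_left
  rw [add_assoc, hC.eq, ← add_assoc] at h
  exact add_neg_eq_zero.mp h.symm

lemma cmt_dot {i j1 : ℤ} (hij1 : adm2 ℓ i j1) (w : C.o.Δ j1) (b : C.o.R j1 i)
    (v : C.o.Δ i) :
    cmt (C.o.dot j1 i w b) v =
      - C.o.star i (-j1) (C.o.inv j1 i b) (C.o.circ j1 i w v) := by
  set S := C.o.star i (-j1) (C.o.inv j1 i b) (C.o.circ j1 i w v) with hS
  have h14 := C.o.r14 j1 i (adm2_symm hij1) w b v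
  have hSc : ∀ x : C.o.Δ i, AddCommute S x :=
    fun x => C.star_addCommute (adm2_neg_right hij1) _ _ x
  rw [cmt, h14]
  simp only [sub_eq_add_neg]
  rw [add_assoc (v + C.o.dot j1 i w b) (-S), ((hSc _).neg_left.neg_right).eq,
    ← add_assoc (v + C.o.dot j1 i w b), add_assoc v (C.o.dot j1 i w b),
    add_neg_cancel, add_zero, ← (hSc v).neg_left.eq, add_assoc,
    add_neg_cancel, add_zero]

lemma negc {i : ℤ} (hi : adm ℓ i) (v : C.o.Δ i) :
    ∀ u, cmt (C.neg1 i u) v = - cmt u v := by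
  obtain ⟨j0, hij0⟩ := exists_partner C.hl hi
  have hdotcase : ∀ j1 : ℤ, adm2 ℓ i j1 → ∀ (w : C.o.Δ j1) (b : C.o.R j1 i),
      cmt (C.neg1 i (C.o.dot j1 i w b)) v = - cmt (C.o.dot j1 i w b) v := by
    intro j1 hij1 w b
    rw [C.hneg1_dot i j1 hij1 w b, C.cmt_dot hij1, C.cmt_dot hij1,
      C.inv_neg (adm2_symm hij1), C.star_neg_left (adm2_neg_right hij1), neg_neg]
  refine C.delta_ind hij0 ?_ ?_ ?_ (hdotcase j0 hij0)
    (hdotcase (-j0) (adm2_neg_right hij0)) ?_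
  · rw [C.neg1_zero i hi, cmt_zero_left, neg_zero]
  · intro a b ha hb
    rw [C.hneg1_add i hi a b, cmt_add_left (C.hcD hi), ha, hb,
      cmt_add_left (C.hcD hi), neg_add_rev,
      ((C.Dmin_addCommute (C.cmt_mem_Dmin hi a v) (cmt b v)).neg_left.neg_right).eq]
  · intro a ha
    rw [C.neg1_neg i hi a, cmt_neg_left (C.hcD hi), ha, cmt_neg_left (C.hcD hi)]
  · intro a b
    rw [C.hneg1_star i j0 hij0 a b]
    rw [cmt_eq_zero_iff.mpr (C.star_addCommute hij0 a b v).eq, neg_zero]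

lemma commute_neg1 {i : ℤ} (hi : adm ℓ i) (u : C.o.Δ i) :
    AddCommute u (C.neg1 i u) := by
  have h := C.negc hi u u
  rw [cmt_self, neg_zero] at h
  exact (AddCommute.symm (cmt_eq_zero_iff.mp h))

lemma neg1_invol {i : ℤ} (hi : adm ℓ i) : ∀ u, C.neg1 i (C.neg1 i u) = u := by
  obtain ⟨j0, hij0⟩ := exists_partner C.hl hi
  have hdotcase : ∀ j1 : ℤ, adm2 ℓ i j1 → ∀ (w : C.o.Δ j1) (b : C.o.R j1 i),
      C.neg1 i (C.neg1 i (C.o.dot j1 i w b)) = C.o.dot j1 i w b := by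
    intro j1 hij1 w b
    rw [C.hneg1_dot i j1 hij1 w b, C.hneg1_dot i j1 hij1 w (-b), neg_neg]
  refine C.delta_ind hij0 ?_ ?_ ?_ (hdotcase j0 hij0)
    (hdotcase (-j0) (adm2_neg_right hij0)) ?_
  · rw [C.neg1_zero i hi, C.neg1_zero i hi]
  · intro a b ha hb
    rw [C.hneg1_add i hi a b, C.hneg1_add i hi, ha, hb]
  · intro a ha
    rw [C.neg1_neg i hi a, C.neg1_neg i hi, ha]
  · intro a b
    rw [C.hneg1_star i j0 hij0 a b, C.hneg1_star i j0 hij0 a b]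

lemma circ_dot_left {i j j1 : ℤ} (hij : adm2 ℓ i j) (hij1 : adm2 ℓ i j1)
    (hj1j : |j1| ≠ |j|) (w : C.o.Δ j1) (b : C.o.R j1 i) (v : C.o.Δ j) :
    C.o.circ i j (C.o.dot j1 i w b) v =
      rc2 (F := C.o.R) rfl (neg_neg j)
        (C.o.inv (-j) i (C.o.mul (-j) j1 i (C.o.circ j j1 v w) b)) := by
  rw [C.circ_flip hij (C.o.dot j1 i w b) v,
    C.o.r22 j j1 i ⟨hij.2.1, hij1.2.1, hij.1, hj1j.symm, hij.2.2.symm, hij1.2.2.symm⟩ v w b]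

lemma negcirc {i j : ℤ} (hij : adm2 ℓ i j) (v : C.o.Δ j) :
    ∀ u, C.o.circ i j (C.neg1 i u) v = - C.o.circ i j u v := by
  obtain ⟨j0, hj0a, hj0i, hj0j⟩ := exists_avoid C.hl |i| |j|
  have hij0 : adm2 ℓ i j0 := ⟨hij.1, hj0a, hj0i.symm⟩
  have hdotcase : ∀ j1 : ℤ, adm2 ℓ i j1 → |j1| ≠ |j| →
      ∀ (w : C.o.Δ j1) (b : C.o.R j1 i),
      C.o.circ i j (C.neg1 i (C.o.dot j1 i w b)) v =
        - C.o.circ i j (C.o.dot j1 i w b) v := by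
    intro j1 hij1 hj1j w b
    have h3 : adm3 ℓ (-j) j1 i :=
      adm3_neg1 ⟨hij.2.1, hij1.2.1, hij.1, hj1j.symm, hij.2.2.symm, hij1.2.2.symm⟩
    rw [C.hneg1_dot i j1 hij1 w b, C.circ_dot_left hij hij1 hj1j,
      C.circ_dot_left hij hij1 hj1j, C.mul_neg_right h3,
      C.inv_neg (adm2_neg_left (adm2_symm hij)), rc2_neg]
  refine C.delta_ind hij0 ?_ ?_ ?_
    (hdotcase j0 hij0 hj0j)
    (hdotcase (-j0) (adm2_neg_right hij0) (by rw [abs_neg]; exact hj0j)) ?_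
  · rw [C.neg1_zero i hij.1, C.circ_zero_left hij, neg_zero]
  · intro a b ha hb
    rw [C.hneg1_add i hij.1 a b, C.o.r10 i j hij, ha, hb, C.o.r10 i j hij,
      neg_add_rev, C.addcommR (adm2_neg_left hij)]
  · intro a ha
    rw [C.neg1_neg i hij.1 a, C.circ_neg_left hij, ha, C.circ_neg_left hij]
  · intro a b
    rw [C.hneg1_star i j0 hij0 a b,
      C.Dmin_circ_zero hij (C.star_mem_Dmin hij0 a b) v, neg_zero]

lemma negcirc_r {i j : ℤ} (hij : adm2 ℓ i j) (u : C.o.Δ i) (v : C.o.Δ j) :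
    C.o.circ i j u (C.neg1 j v) = - C.o.circ i j u v := by
  rw [C.circ_flip hij u (C.neg1 j v), C.negcirc (adm2_symm hij) u v,
    C.inv_neg (adm2_neg_left (adm2_symm hij)), rc2_neg, ← C.circ_flip hij u v]

lemma negdot {i j : ℤ} (hij : adm2 ℓ i j) (b : C.o.R i j) :
    ∀ u, C.o.dot i j (C.neg1 i u) b = C.o.dot i j u (-b) := by
  obtain ⟨j0, hj0a, hj0i, hj0j⟩ := exists_avoid C.hl |i| |j|
  have hij0 : adm2 ℓ i j0 := ⟨hij.1, hj0a, hj0i.symm⟩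
  have hdotcase : ∀ j1 : ℤ, adm2 ℓ i j1 → |j1| ≠ |j| →
      ∀ (w : C.o.Δ j1) (b0 : C.o.R j1 i),
      C.o.dot i j (C.neg1 i (C.o.dot j1 i w b0)) b =
        C.o.dot i j (C.o.dot j1 i w b0) (-b) := by
    intro j1 hij1 hj1j w b0
    have h3 : adm3 ℓ j1 i j := ⟨hij1.2.1, hij.1, hij.2.1, hij1.2.2.symm, hj1j, hij.2.2⟩
    rw [C.hneg1_dot i j1 hij1 w b0, C.o.r28 j1 i j h3 w (-b0) b,
      C.o.r28 j1 i j h3 w b0 (-b), C.mul_neg_left h3, C.mul_neg_right h3]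
  refine C.delta_ind hij0 ?_ ?_ ?_
    (hdotcase j0 hij0 hj0j)
    (hdotcase (-j0) (adm2_neg_right hij0) (by rw [abs_neg]; exact hj0j)) ?_
  · rw [C.neg1_zero i hij.1, C.dot_zero_left hij, C.dot_zero_left hij]
  · intro u u' hu hu'
    rw [C.hneg1_add i hij.1 u u', C.o.r15 i j hij, hu, hu', C.o.r15 i j hij]
  · intro u hu
    rw [C.neg1_neg i hij.1 u, C.dot_neg_left hij, hu, C.dot_neg_left hij]
  · intro a' b'
    have h3 : adm3 ℓ i j0 j := ⟨hij.1, hij0.2.1, hij.2.1, hij0.2.2, hij.2.2, hj0j⟩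
    have hjj0 : adm2 ℓ j j0 := ⟨hij.2.1, hij0.2.1, hj0j.symm⟩
    rw [C.hneg1_star i j0 hij0 a' b', C.o.r25 i j0 j h3 a' b' b,
      C.o.r25 i j0 j h3 a' b' (-b), C.inv_neg hij,
      C.mul_neg_left (adm3_neg1 (adm3_neg2 (adm3_perm312 h3))),
      C.star_neg_left hjj0, C.mul_neg_right (adm3_perm213 h3),
      C.star_neg_right hjj0, neg_neg]

end Ctx
end Stmt16
namespace Stmt16

/-- `n(n+1)/2`. -/
def Pc (n : ℤ) : ℤ := n * (n + 1) / 2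
/-- `n(n-1)/2`. -/
def Qc (n : ℤ) : ℤ := n * (n - 1) / 2

lemma two_Pc (n : ℤ) : 2 * Pc n = n * (n + 1) :=
  Int.mul_ediv_cancel' (Int.even_mul_succ_self n).two_dvd

lemma two_Qc (n : ℤ) : 2 * Qc n = n * (n - 1) := by
  have h : Even (n * (n - 1)) := by
    have := Int.even_mul_succ_self (n - 1)
    rwa [show (n-1) * (n-1+1) = n * (n-1) by ring] at this
  exact Int.mul_ediv_cancel' h.two_dvd

lemma Pc_zero : Pc 0 = 0 := by norm_num [Pc]
lemma Qc_zero : Qc 0 = 0 := by norm_num [Qc]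
lemma Pc_one : Pc 1 = 1 := by norm_num [Pc]
lemma Qc_one : Qc 1 = 0 := by norm_num [Qc]
lemma Pc_negone : Pc (-1) = 0 := by norm_num [Pc]
lemma Qc_negone : Qc (-1) = 1 := by norm_num [Qc]

lemma Pc_sub_Qc (n : ℤ) : Pc n - Qc n = n := by
  have a := two_Pc n; have b := two_Qc n
  have c : n * (n+1) = n * (n-1) + 2 * n := by ring
  linarith

lemma Pc_add_Qc (n : ℤ) : Pc n + Qc n = n * n := by
  have a := two_Pc n; have b := two_Qc n
  have c : n * (n+1) + n * (n-1) = 2 * (n * n) := by ring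
  linarith

lemma Pc_neg (n : ℤ) : Pc (-n) = Qc n := by
  have a := two_Pc (-n); have b := two_Qc n
  have c : (-n) * (-n + 1) = n * (n - 1) := by ring
  linarith

lemma Qc_neg (n : ℤ) : Qc (-n) = Pc n := by
  have a := two_Qc (-n); have b := two_Pc n
  have c : (-n) * (-n - 1) = n * (n + 1) := by ring
  linarith

lemma Pc_addk (k k' : ℤ) : Pc (k + k') = Pc k + Pc k' + k * k' := by
  have a := two_Pc (k + k'); have b := two_Pc k; have c := two_Pc k'
  have d : (k + k') * (k + k' + 1) = k * (k+1) + k' * (k'+1) + 2 * (k * k') := by ring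
  linarith

lemma Qc_addk (k k' : ℤ) : Qc (k + k') = Qc k + Qc k' + k * k' := by
  have a := two_Qc (k + k'); have b := two_Qc k; have c := two_Qc k'
  have d : (k + k') * (k + k' - 1) = k * (k-1) + k' * (k'-1) + 2 * (k * k') := by ring
  linarith

lemma Pc_mul (k k' : ℤ) : Pc (k * k') = Pc k * Pc k' + Qc k * Qc k' := by
  have h : 2 * (2 * Pc (k * k')) = 2 * (2 * (Pc k * Pc k' + Qc k * Qc k')) := by
    rw [two_Pc]
    calc 2 * (k * k' * (k * k' + 1))
        = (2 * Pc k) * (2 * Pc k') + (2 * Qc k) * (2 * Qc k') := by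
          rw [two_Pc, two_Pc, two_Qc, two_Qc]; ring
      _ = 2 * (2 * (Pc k * Pc k' + Qc k * Qc k')) := by ring
  linarith

lemma Qc_mul (k k' : ℤ) : Qc (k * k') = Pc k * Qc k' + Qc k * Pc k' := by
  have h : 2 * (2 * Qc (k * k')) = 2 * (2 * (Pc k * Qc k' + Qc k * Pc k')) := by
    rw [two_Qc]
    calc 2 * (k * k' * (k * k' - 1))
        = (2 * Pc k) * (2 * Qc k') + (2 * Qc k) * (2 * Pc k') := by
          rw [two_Pc, two_Qc, two_Qc, two_Pc]; ring
      _ = 2 * (2 * (Pc k * Qc k' + Qc k * Pc k')) := by ring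
  linarith

/-- Helpers for shuffling central elements. -/
lemma add_central_rot {G : Type*} [AddGroup G] {c : G} (hc : ∀ z : G, AddCommute c z)
    (x y : G) : x + c + y = x + y + c := by
  rw [add_assoc, (hc y).eq, ← add_assoc]

lemma add_add_add_central {G : Type*} [AddGroup G] {c : G}
    (hc : ∀ z : G, AddCommute c z) (d x y : G) :
    (x + c) + (y + d) = (x + y) + (c + d) := by
  rw [add_assoc x c (y + d), ← add_assoc c y d, (hc y).eq, add_assoc y c d,
    ← add_assoc x y (c + d)]

namespace Ctx
variable {ℓ : ℕ} (C : Ctx ℓ)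

lemma tau_mem_Dmin {i : ℤ} (hi : adm ℓ i) : ∀ u, u + C.neg1 i u ∈ C.o.Dmin i := by
  obtain ⟨j0, hij0⟩ := exists_partner C.hl hi
  have hdotcase : ∀ j1 : ℤ, adm2 ℓ i j1 → ∀ (w : C.o.Δ j1) (b : C.o.R j1 i),
      C.o.dot j1 i w b + C.neg1 i (C.o.dot j1 i w b) ∈ C.o.Dmin i := by
    intro j1 hij1 w b
    rw [C.hneg1_dot i j1 hij1 w b, C.dot_add_dot_neg (adm2_symm hij1) w b]
    exact C.star_mem_Dmin (adm2_neg_right hij1) _ _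
  refine C.delta_ind hij0 ?_ ?_ ?_ (hdotcase j0 hij0)
    (hdotcase (-j0) (adm2_neg_right hij0)) ?_
  · rw [C.neg1_zero i hi, add_zero]; exact zero_mem _
  · intro u v hu hv
    have hc1 : cmt v (C.neg1 i u) + C.neg1 i v = C.neg1 i v + cmt v (C.neg1 i u) :=
      (C.Dmin_addCommute (C.cmt_mem_Dmin hi v (C.neg1 i u)) (C.neg1 i v)).eq
    have heq : u + v + (C.neg1 i u + C.neg1 i v) =
        (u + C.neg1 i u) + ((v + C.neg1 i v) + cmt v (C.neg1 i u)) := by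
      rw [add_assoc u v (C.neg1 i u + C.neg1 i v), ← add_assoc v (C.neg1 i u) (C.neg1 i v),
        cmt_swap (C.hcD hi) v (C.neg1 i u)]
      simp only [add_assoc]
      rw [hc1]
    rw [C.hneg1_add i hi u v, heq]
    exact add_mem hu (add_mem hv (C.cmt_mem_Dmin hi v (C.neg1 i u)))
  · intro u hu
    rw [C.neg1_neg i hi u, show -u + -(C.neg1 i u) = -(C.neg1 i u + u) from (neg_add_rev _ _).symm,
      ← (C.commute_neg1 hi u).eq]
    exact neg_mem hu
  · intro a b
    rw [C.hneg1_star i j0 hij0 a b]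
    exact add_mem (C.star_mem_Dmin hij0 a b) (C.star_mem_Dmin hij0 a b)

/-- The candidate action of `n : ℤ`. -/
def act (i : ℤ) (u : C.o.Δ i) (n : ℤ) : C.o.Δ i :=
  Pc n • u + Qc n • C.neg1 i u

lemma act_zero_n (i : ℤ) (u : C.o.Δ i) : C.act i u 0 = 0 := by
  rw [act, Pc_zero, Qc_zero, zero_zsmul, zero_zsmul, add_zero]

lemma act_zero_u {i : ℤ} (hi : adm ℓ i) (n : ℤ) : C.act i 0 n = 0 := by
  rw [act, C.neg1_zero i hi, zsmul_zero, zsmul_zero, add_zero]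

lemma act_one (i : ℤ) (u : C.o.Δ i) : C.act i u 1 = u := by
  rw [act, Pc_one, Qc_one, one_zsmul, zero_zsmul, add_zero]

lemma act_neg_one (i : ℤ) (u : C.o.Δ i) : C.act i u (-1) = C.neg1 i u := by
  rw [act, Pc_negone, Qc_negone, one_zsmul, zero_zsmul, zero_add]

lemma act_addsc {i : ℤ} (hi : adm ℓ i) (u : C.o.Δ i) (k k' : ℤ) :
    C.act i u (k + k') = C.act i u k + (k * k') • (u + C.neg1 i u) + C.act i u k' := by
  have h := C.commute_neg1 hi u
  rw [act, act, act, h.zsmul_add (k * k'), lin2 h, lin2 h, Pc_addk, Qc_addk,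
    show Pc k + Pc k' + k * k' = Pc k + k * k' + Pc k' by ring,
    show Qc k + Qc k' + k * k' = Qc k + k * k' + Qc k' by ring]

lemma act_succ {i : ℤ} (hi : adm ℓ i) (u : C.o.Δ i) (n : ℤ) :
    C.act i u (n + 1) = C.act i u n + n • (u + C.neg1 i u) + u := by
  rw [C.act_addsc hi u n 1, mul_one, C.act_one]

lemma act_pred {i : ℤ} (hi : adm ℓ i) (u : C.o.Δ i) (n : ℤ) :
    C.act i u (n - 1) = C.act i u n + (-n) • (u + C.neg1 i u) + C.neg1 i u := by
  rw [show n - 1 = n + (-1) by ring, C.act_addsc hi u n (-1), C.act_neg_one,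
    mul_neg_one]

lemma act_negswap {i : ℤ} (hi : adm ℓ i) (u : C.o.Δ i) (n : ℤ) :
    C.act i u (-n) = C.act i (C.neg1 i u) n := by
  rw [act, act, C.neg1_invol hi u, Pc_neg, Qc_neg]
  exact ((C.commute_neg1 hi u).symm.zsmul_zsmul (Pc n) (Qc n)).eq.symm

lemma neg1_act {i : ℤ} (hi : adm ℓ i) (u : C.o.Δ i) (n : ℤ) :
    C.neg1 i (C.act i u n) = C.act i u (-n) := by
  rw [act, C.hneg1_add i hi, C.neg1_zsmul i hi, C.neg1_zsmul i hi, C.neg1_invol hi u,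
    act, Pc_neg, Qc_neg]
  exact ((C.commute_neg1 hi u).symm.zsmul_zsmul (Pc n) (Qc n)).eq

lemma cmt_act {i : ℤ} (hi : adm ℓ i) (u v : C.o.Δ i) (n : ℤ) :
    cmt u (C.act i v n) = n • cmt u v := by
  have hnv : cmt u (C.neg1 i v) = - cmt u v := by
    rw [cmt_antisymm u (C.neg1 i v), C.negc hi u v, neg_neg, cmt_antisymm v u]
  rw [act, cmt_add_right (C.hcD hi), cmt_zsmul_right (C.hcD hi),
    cmt_zsmul_right (C.hcD hi), hnv, zsmul_neg, ← neg_zsmul, ← add_zsmul,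
    show Pc n + -Qc n = n from by have := Pc_sub_Qc n; linarith]

end Ctx
end Stmt16
namespace Stmt16
namespace Ctx
variable {ℓ : ℕ} (C : Ctx ℓ)

lemma tau_add {i : ℤ} (hi : adm ℓ i) (u v : C.o.Δ i) :
    (u + v) + C.neg1 i (u + v) =
      ((u + C.neg1 i u) + (v + C.neg1 i v)) + cmt u v := by
  have hvnu : cmt v (C.neg1 i u) = cmt u v := by
    rw [cmt_antisymm v (C.neg1 i u), C.negc hi v u, neg_neg]
  have hc1 : cmt u v + C.neg1 i v = C.neg1 i v + cmt u v :=
    (C.Dmin_addCommute (C.cmt_mem_Dmin hi u v) _).eq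
  rw [C.hneg1_add i hi u v, add_assoc u v _,
    ← add_assoc v (C.neg1 i u) (C.neg1 i v), cmt_swap (C.hcD hi) v (C.neg1 i u), hvnu,
    add_assoc (C.neg1 i u + v) (cmt u v) (C.neg1 i v), hc1]
  simp only [add_assoc]

lemma act_add_aux {i : ℤ} (hi : adm ℓ i) (u v : C.o.Δ i) (n : ℤ)
    (ih : C.act i (u + v) n = C.act i u n + C.act i v n) :
    C.act i (u + v) (n + 1) = C.act i u (n + 1) + C.act i v (n + 1) := by
  have hTu := C.tau_mem_Dmin hi u
  have hTv := C.tau_mem_Dmin hi v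
  have hcm := C.cmt_mem_Dmin hi u v
  have hcTu : ∀ z, AddCommute (n • (u + C.neg1 i u)) z :=
    fun z => C.Dmin_addCommute (zsmul_mem hTu n) z
  have hcTv : ∀ z, AddCommute (n • (v + C.neg1 i v)) z :=
    fun z => C.Dmin_addCommute (zsmul_mem hTv n) z
  have hccm : ∀ z, AddCommute (n • cmt u v) z :=
    fun z => C.Dmin_addCommute (zsmul_mem hcm n) z
  rw [C.act_succ hi, C.act_succ hi, C.act_succ hi, ih, C.tau_add hi u v]
  set A := C.act i u n with hA
  set B := C.act i v n with hB
  have hsplit : n • (((u + C.neg1 i u) + (v + C.neg1 i v)) + cmt u v) =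
      (n • (u + C.neg1 i u) + n • (v + C.neg1 i v)) + n • cmt u v := by
    rw [(C.Dmin_addCommute (add_mem hTu hTv) (cmt u v)).zsmul_add,
      (C.Dmin_addCommute hTu (v + C.neg1 i v)).zsmul_add]
  have hcX : ∀ z, AddCommute ((n • (u + C.neg1 i u) + n • (v + C.neg1 i v)) + n • cmt u v) z :=
    fun z => C.Dmin_addCommute
      (add_mem (add_mem (zsmul_mem hTu n) (zsmul_mem hTv n)) (zsmul_mem hcm n)) z
  rw [hsplit, add_central_rot hcX (A + B) (u + v),
    add_central_rot hcTu A u, add_central_rot hcTv B v,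
    add_add_add_central hcTu (n • (v + C.neg1 i v)) (A + u) (B + v)]
  have hswap : u + B = (B + u) + n • cmt u v := by
    rw [cmt_swap (C.hcD hi) u B, hB, C.cmt_act hi u v n]
  have hmid : (A + u) + (B + v) = ((A + B) + (u + v)) + n • cmt u v := by
    rw [add_assoc A u (B + v), ← add_assoc u B v, hswap,
      add_central_rot hccm (B + u) v]
    simp only [add_assoc]
  rw [hmid, add_assoc ((A + B) + (u + v)) (n • cmt u v) _, (hccm _).eq,
    ← add_assoc ((A + B) + (u + v)) _ (n • cmt u v)]

end Ctx
end Stmt16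
namespace Stmt16
namespace Ctx
variable {ℓ : ℕ} (C : Ctx ℓ)

lemma act_add_nat {i : ℤ} (hi : adm ℓ i) (u v : C.o.Δ i) (m : ℕ) :
    C.act i (u + v) (m : ℤ) = C.act i u (m : ℤ) + C.act i v (m : ℤ) := by
  induction m with
  | zero =>
    rw [Nat.cast_zero, C.act_zero_n, C.act_zero_n, C.act_zero_n, add_zero]
  | succ m ihm =>
    rw [Nat.cast_succ]
    exact C.act_add_aux hi u v (m : ℤ) ihm

lemma act_add {i : ℤ} (hi : adm ℓ i) (u v : C.o.Δ i) (n : ℤ) :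
    C.act i (u + v) n = C.act i u n + C.act i v n := by
  rcases Int.eq_nat_or_neg n with ⟨m, rfl | rfl⟩
  · exact C.act_add_nat hi u v m
  · rw [C.act_negswap hi _ m, C.act_negswap hi u m, C.act_negswap hi v m,
      C.hneg1_add i hi u v]
    exact C.act_add_nat hi _ _ m

lemma act_neg {i : ℤ} (hi : adm ℓ i) (u : C.o.Δ i) (n : ℤ) :
    C.act i (-u) n = - C.act i u n := by
  have h := C.act_add hi u (-u) n
  rw [add_neg_cancel, C.act_zero_u hi] at h
  exact (neg_eq_of_add_eq_zero_right h.symm).symm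

lemma tau_act {i : ℤ} (hi : adm ℓ i) (u : C.o.Δ i) (k : ℤ) :
    C.act i u k + C.neg1 i (C.act i u k) = (k * k) • (u + C.neg1 i u) := by
  rw [C.neg1_act hi u k]
  show C.act i u k + C.act i u (-k) = (k * k) • (u + C.neg1 i u)
  rw [act, act, Pc_neg, Qc_neg, lin2 (C.commute_neg1 hi u), Pc_add_Qc,
    show Qc k + Pc k = k * k from by have := Pc_add_Qc k; linarith,
    ← (C.commute_neg1 hi u).zsmul_add]

lemma act_act {i : ℤ} (hi : adm ℓ i) (u : C.o.Δ i) (k k' : ℤ) :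
    C.act i (C.act i u k) k' = C.act i u (k * k') := by
  have hnat : ∀ m : ℕ, ∀ k : ℤ, C.act i (C.act i u k) (m : ℤ) = C.act i u (k * m) := by
    intro m
    induction m with
    | zero => intro k; rw [Nat.cast_zero, mul_zero, C.act_zero_n, C.act_zero_n]
    | succ m ihm =>
      intro k
      rw [Nat.cast_succ, C.act_succ hi (C.act i u k) (m : ℤ), ihm k,
        C.tau_act hi u k,
        show k * ((m : ℤ) + 1) = k * (m : ℤ) + k by ring,
        C.act_addsc hi u (k * (m : ℤ)) k,
        show (m : ℤ) • ((k*k) • (u + C.neg1 i u)) = (k * (m:ℤ) * k) • (u + C.neg1 i u) from ?_]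
      rw [← mul_zsmul]
      congr 1
      ring
  rcases Int.eq_nat_or_neg k' with ⟨m, rfl | rfl⟩
  · exact hnat m k
  · rw [C.act_negswap hi (C.act i u k) m, C.neg1_act hi u k, hnat m (-k),
      show -k * (m : ℤ) = k * (-(m : ℤ)) by ring]

lemma act_fix {i : ℤ} {v : C.o.Δ i} (hfix : C.neg1 i v = v) (n : ℤ) :
    C.act i v n = (n * n) • v := by
  rw [act, hfix, ← add_zsmul, Pc_add_Qc]

lemma act_dot {i j : ℤ} (hij : adm2 ℓ i j) (u : C.o.Δ i) (b : C.o.R i j) (n : ℤ) :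
    C.act j (C.o.dot i j u b) n = C.o.dot i j u (n • b) := by
  have hj : adm ℓ j := hij.2.1
  have hji' : adm2 ℓ j (-i) := adm2_neg_right (adm2_symm hij)
  have hSeq : C.o.dot i j u b + C.neg1 j (C.o.dot i j u b) =
      C.o.star j (-i) (C.o.inv i j b) (C.o.tri i j u b) := by
    rw [C.hneg1_dot j i (adm2_symm hij) u b, C.dot_add_dot_neg hij u b]
  induction n using Int.induction_on with
  | zero => rw [C.act_zero_n, zero_zsmul, C.dot_zero_right hij]
  | succ n ih =>
    rw [C.act_succ hj, ih, hSeq, add_zsmul, one_zsmul,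
      C.o.r18 i j hij u ((n : ℤ) • b) b, C.tri_zsmul_right hij (n : ℤ) u b,
      C.star_zsmul_right hji' (n : ℤ)]
  | pred n ih =>
    rw [show (-(n:ℤ) - 1) = (-(n:ℤ)) + -1 by ring, C.act_addsc hj _ (-(n:ℤ)) (-1),
      C.act_neg_one, ih, hSeq, C.hneg1_dot j i (adm2_symm hij) u b,
      add_zsmul b (-(n:ℤ)) (-1), neg_one_zsmul, C.o.r18 i j hij u ((-(n:ℤ)) • b) (-b),
      C.inv_neg hij, C.tri_zsmul_right hij, C.star_neg_left hji',
      C.star_zsmul_right hji', mul_neg_one, neg_zsmul, neg_neg]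
    rw [neg_zsmul, neg_neg]
end Ctx
end Stmt16
namespace Stmt16

lemma combine_PQ {G : Type*} [AddGroup G] (c : ℤ) (x : G) :
    Pc c • x + Qc c • (-x) = c • x := by
  rw [zsmul_neg, ← neg_zsmul, ← add_zsmul,
    show Pc c + -Qc c = c from by have := Pc_sub_Qc c; linarith]

namespace Ctx
variable {ℓ : ℕ} (C : Ctx ℓ)

lemma act_cmt {i : ℤ} (hi : adm ℓ i) (u v : C.o.Δ i) (k k' : ℤ) :
    cmt (C.act i u k) (C.act i v k') = (k * k') • cmt u v := by
  rw [show C.act i u k = Pc k • u + Qc k • C.neg1 i u from rfl,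
    cmt_add_left (C.hcD hi), cmt_zsmul_left (C.hcD hi), cmt_zsmul_left (C.hcD hi),
    C.cmt_act hi u v k', C.cmt_act hi (C.neg1 i u) v k', C.negc hi v u,
    zsmul_neg, zsmul_neg, ← mul_zsmul, ← mul_zsmul, ← neg_zsmul, ← add_zsmul,
    show Pc k * k' + -(Qc k * k') = k * k' from by
      have := Pc_sub_Qc k; linear_combination k' * this]

lemma tri_add_left_Dmin {i j : ℤ} (hij : adm2 ℓ i j) {v : C.o.Δ i}
    (hv : v ∈ C.o.Dmin i) (w : C.o.Δ i) (a : C.o.R i j) :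
    C.o.tri i j (v + w) a = C.o.tri i j v a + C.o.tri i j w a := by
  rw [C.o.r16 i j hij v w a, C.Dmin_circ_zero hij hv _, add_zero]
  exact C.addcommR (adm2_neg_left hij) _ _

lemma tri_neg_Dmin {i j : ℤ} (hij : adm2 ℓ i j) {v : C.o.Δ i}
    (hv : v ∈ C.o.Dmin i) (a : C.o.R i j) :
    C.o.tri i j (-v) a = - C.o.tri i j v a := by
  have h := C.tri_add_left_Dmin hij hv (-v) a
  rw [add_neg_cancel, C.tri_zero_left hij] at h
  exact (neg_eq_of_add_eq_zero_right h.symm).symm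

lemma tri_zsmul_Dmin {i j : ℤ} (hij : adm2 ℓ i j) {v : C.o.Δ i}
    (hv : v ∈ C.o.Dmin i) (n : ℤ) (a : C.o.R i j) :
    C.o.tri i j (n • v) a = n • C.o.tri i j v a := by
  induction n using Int.induction_on with
  | zero => rw [zero_zsmul, zero_zsmul, C.tri_zero_left hij]
  | succ n ih =>
    rw [add_zsmul, one_zsmul, C.tri_add_left_Dmin hij (zsmul_mem hv _) v a, ih,
      add_zsmul, one_zsmul]
  | pred n ih =>
    rw [show (-(n:ℤ) - 1) = (-(n:ℤ)) + -1 by ring, add_zsmul, neg_one_zsmul,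
      C.tri_add_left_Dmin hij (zsmul_mem hv _) (-v) a, ih,
      C.tri_neg_Dmin hij hv a, add_zsmul, neg_one_zsmul]

lemma tri_neg {i j : ℤ} (hij : adm2 ℓ i j) (w : C.o.Δ i) (a : C.o.R i j) :
    C.o.tri i j (-w) a =
      C.o.circ i j w (C.o.dot i j w (-a)) - C.o.tri i j w a := by
  have h := C.o.r16 i j hij (-w) w a
  rw [neg_add_cancel, C.tri_zero_left hij, C.circ_neg_left hij] at h
  have h3 := neg_eq_of_add_eq_zero_right h.symm
  rw [neg_add_rev, neg_neg] at h3
  rw [← h3, sub_eq_add_neg]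

lemma tri_via_neg {i j : ℤ} (hij : adm2 ℓ i j) (w : C.o.Δ i) (a : C.o.R i j) :
    C.o.tri i j w a =
      C.o.circ i j w (C.o.dot i j w (-a)) - C.o.tri i j (-w) a := by
  rw [eq_sub_iff_add_eq, C.addcommR (adm2_neg_left hij), C.tri_neg hij w a,
    sub_add_cancel]

lemma circ_act_left {i j : ℤ} (hij : adm2 ℓ i j) (c : ℤ) (u : C.o.Δ i)
    (v : C.o.Δ j) : C.o.circ i j (C.act i u c) v = c • C.o.circ i j u v := by
  rw [show C.act i u c = Pc c • u + Qc c • C.neg1 i u from rfl, C.o.r10 i j hij,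
    C.circ_zsmul_left hij, C.circ_zsmul_left hij, C.negcirc hij v u, combine_PQ]

lemma circ_act_right {i j : ℤ} (hij : adm2 ℓ i j) (c : ℤ) (u : C.o.Δ i)
    (v : C.o.Δ j) : C.o.circ i j u (C.act j v c) = c • C.o.circ i j u v := by
  rw [show C.act j v c = Pc c • v + Qc c • C.neg1 j v from rfl, C.o.r11 i j hij,
    C.circ_zsmul_right hij, C.circ_zsmul_right hij, C.negcirc_r hij u v, combine_PQ]

lemma circ_act_dot {i j : ℤ} (hij : adm2 ℓ i j) (c : ℤ) (u u' : C.o.Δ i)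
    (x : C.o.R i j) :
    C.o.circ i j (C.act i u c) (C.o.dot i j (C.act i u' c) x) =
      (c * c) • C.o.circ i j u (C.o.dot i j u' x) := by
  set S := C.o.dot i j u' x + C.o.dot i j u' (-x) with hSdef
  have hSmem : S ∈ C.o.Dmin j := by
    rw [hSdef, C.dot_add_dot_neg hij u' x]
    exact C.star_mem_Dmin (adm2_neg_right (adm2_symm hij)) _ _
  have hY : C.o.dot i j u' (-x) = - C.o.dot i j u' x + S := by
    rw [hSdef, ← add_assoc, neg_add_cancel, zero_add]
  have hdact : C.o.dot i j (C.act i u' c) x = c • C.o.dot i j u' x + Qc c • S := by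
    rw [show C.act i u' c = Pc c • u' + Qc c • C.neg1 i u' from rfl,
      C.o.r15 i j hij, C.dot_zsmul_left hij, C.dot_zsmul_left hij,
      C.negdot hij x u', hY,
      ((C.Dmin_addCommute hSmem (- C.o.dot i j u' x)).symm.zsmul_add (Qc c)),
      ← add_assoc, combine_PQ]
  rw [hdact, C.o.r11 i j hij,
    C.circ_zero_right_of_Dmin hij (zsmul_mem hSmem _) _, add_zero,
    C.circ_zsmul_right hij, C.circ_act_left hij, ← mul_zsmul]

lemma tri_act {i j : ℤ} (hij : adm2 ℓ i j) (c : ℤ) (a : C.o.R i j) :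
    ∀ u : C.o.Δ i, C.o.tri i j (C.act i u c) a = (c * c) • C.o.tri i j u a := by
  obtain ⟨j0, hj0a, hj0i, hj0j⟩ := exists_avoid C.hl |i| |j|
  have hij0 : adm2 ℓ i j0 := ⟨hij.1, hj0a, hj0i.symm⟩
  have hdotcase : ∀ j1 : ℤ, adm2 ℓ i j1 → |j1| ≠ |j| →
      ∀ (w : C.o.Δ j1) (b0 : C.o.R j1 i),
      C.o.tri i j (C.act i (C.o.dot j1 i w b0) c) a =
        (c * c) • C.o.tri i j (C.o.dot j1 i w b0) a := by
    intro j1 hij1 hj1j w b0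
    have h3 : adm3 ℓ j1 i j := ⟨hij1.2.1, hij.1, hij.2.1, hij1.2.2.symm, hj1j, hij.2.2⟩
    have hji1 : adm2 ℓ j1 i := adm2_symm hij1
    -- the universal formula for tri (dot j1 i w b') a
    have hM : ∀ b' : C.o.R j1 i, C.o.tri i j (-(C.o.dot j1 i w b')) a =
        C.o.mul (-i) j1 j
          (rc2 (F := C.o.R) rfl (neg_neg j1) (C.o.inv (-j1) i (C.o.tri j1 i w b')))
          (C.o.mul j1 i j b' a) :=
      fun b' => C.o.r27 j1 i j h3 w b' a
    have hCirc : ∀ b' : C.o.R j1 i,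
        C.o.circ i j (C.o.dot j1 i w b') (C.o.dot i j (C.o.dot j1 i w b') (-a)) =
        - C.o.mul (-i) (-j1) j (C.o.inv j1 i b')
            (C.o.tri j1 j w (C.o.mul j1 i j b' (-a))) -
          C.o.mul (-i) j1 j
            (rc2 (F := C.o.R) rfl (neg_neg j1) (C.o.inv (-j1) i (C.o.tri j1 i w b')))
            (C.o.mul j1 i j b' (-a)) := by
      intro b'
      rw [C.o.r28 j1 i j h3 w b' (-a)]
      have h23 := C.o.r23 j1 i j h3 w b' (C.o.mul j1 i j b' (-a))
      rw [add_assoc] at h23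
      have h5 := (neg_eq_of_add_eq_zero_right h23).symm
      exact eq_sub_of_add_eq h5
    have hj1j2 : adm2 ℓ j1 j := ⟨hij1.2.1, hij.2.1, hj1j⟩
    have h3a : adm3 ℓ (-i) j1 j := adm3_neg1 (adm3_perm213 h3)
    have h3b : adm3 ℓ (-i) (-j1) j := adm3_neg2 h3a
    rw [C.act_dot hji1 w b0 c, C.tri_via_neg hij (C.o.dot j1 i w (c • b0)) a,
      C.tri_via_neg hij (C.o.dot j1 i w b0) a,
      hCirc (c • b0), hCirc b0, hM (c • b0), hM b0,
      C.tri_zsmul_right hji1 c w b0, C.inv_zsmul (adm2_neg_left hji1), rc2_zsmul,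
      C.inv_zsmul hji1 c b0, C.mul_zsmul_left h3 c b0 a, C.mul_zsmul_left h3 c b0 (-a),
      C.tri_zsmul_right hj1j2 c w (C.o.mul j1 i j b0 (-a)),
      C.mul_zsmul_left h3b, C.mul_zsmul_right h3b,
      C.mul_zsmul_left h3a, C.mul_zsmul_left h3a, C.mul_zsmul_right h3a,
      C.mul_zsmul_right h3a, ← mul_zsmul, ← mul_zsmul, ← mul_zsmul,
      C.zsmulR_sub (adm2_neg_left hij), C.zsmulR_sub (adm2_neg_left hij), zsmul_neg]
  refine C.delta_ind hij0 ?_ ?_ ?_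
    (fun w b0 => hdotcase j0 hij0 hj0j w b0)
    (fun w b0 => hdotcase (-j0) (adm2_neg_right hij0) (by rw [abs_neg]; exact hj0j) w b0) ?_
  · rw [C.act_zero_u hij.1, C.tri_zero_left hij, zsmul_zero]
  · intro u u' hu hu'
    rw [C.act_add hij.1 u u' c, C.o.r16 i j hij (C.act i u c) (C.act i u' c) a, hu',
      C.circ_act_dot hij c u u' (-a), hu, C.o.r16 i j hij u u' a,
      C.zsmulR_add (adm2_neg_left hij), C.zsmulR_add (adm2_neg_left hij)]
  · intro u hu
    rw [C.act_neg hij.1 u c, C.tri_neg hij (C.act i u c) a, hu,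
      C.circ_act_dot hij c u u (-a), C.tri_neg hij u a,
      C.zsmulR_sub (adm2_neg_left hij)]
  · intro a' b'
    rw [C.act_fix (C.hneg1_star i j0 hij0 a' b') c,
      C.tri_zsmul_Dmin hij (C.star_mem_Dmin hij0 a' b') (c * c) a]

lemma dot_act {i j : ℤ} (hij : adm2 ℓ i j) (c : ℤ) (a : C.o.R i j) :
    ∀ u : C.o.Δ i, C.o.dot i j (C.act i u c) a = C.o.dot i j u (c • a) := by
  obtain ⟨j0, hj0a, hj0i, hj0j⟩ := exists_avoid C.hl |i| |j|
  have hij0 : adm2 ℓ i j0 := ⟨hij.1, hj0a, hj0i.symm⟩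
  have hdotcase : ∀ j1 : ℤ, adm2 ℓ i j1 → |j1| ≠ |j| →
      ∀ (w : C.o.Δ j1) (b0 : C.o.R j1 i),
      C.o.dot i j (C.act i (C.o.dot j1 i w b0) c) a =
        C.o.dot i j (C.o.dot j1 i w b0) (c • a) := by
    intro j1 hij1 hj1j w b0
    have h3 : adm3 ℓ j1 i j := ⟨hij1.2.1, hij.1, hij.2.1, hij1.2.2.symm, hj1j, hij.2.2⟩
    rw [C.act_dot (adm2_symm hij1) w b0 c, C.o.r28 j1 i j h3 w (c • b0) a,
      C.o.r28 j1 i j h3 w b0 (c • a), C.mul_zsmul_left h3, C.mul_zsmul_right h3]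
  refine C.delta_ind hij0 ?_ ?_ ?_
    (fun w b0 => hdotcase j0 hij0 hj0j w b0)
    (fun w b0 => hdotcase (-j0) (adm2_neg_right hij0) (by rw [abs_neg]; exact hj0j) w b0) ?_
  · rw [C.act_zero_u hij.1, C.dot_zero_left hij, C.dot_zero_left hij]
  · intro u u' hu hu'
    rw [C.act_add hij.1 u u' c, C.o.r15 i j hij, hu, hu', C.o.r15 i j hij]
  · intro u hu
    rw [C.act_neg hij.1 u c, C.dot_neg_left hij, hu, C.dot_neg_left hij]
  · intro a' b'
    have h3' : adm3 ℓ i j0 j := ⟨hij.1, hij0.2.1, hij.2.1, hij0.2.2, hij.2.2, hj0j⟩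
    have hjj0 : adm2 ℓ j j0 := ⟨hij.2.1, hij0.2.1, hj0j.symm⟩
    rw [C.act_fix (C.hneg1_star i j0 hij0 a' b') c, C.dot_zsmul_left hij,
      C.o.r25 i j0 j h3' a' b' a, C.o.r25 i j0 j h3' a' b' (c • a),
      C.inv_zsmul hij, C.mul_zsmul_left (adm3_neg1 (adm3_neg2 (adm3_perm312 h3'))),
      C.star_zsmul_left hjj0, C.mul_zsmul_right (adm3_perm213 h3'),
      C.star_zsmul_right hjj0, ← mul_zsmul]

end Ctx
end Stmt16
namespace Stmt16
namespace Ctx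
variable {ℓ : ℕ} (C : Ctx ℓ)

section CZ
variable {i j : ℤ} {v : C.o.Δ i}

lemma tri_add_left_cz (hij : adm2 ℓ i j) (hv0 : ∀ x : C.o.Δ j, C.o.circ i j v x = 0)
    (w : C.o.Δ i) (a : C.o.R i j) :
    C.o.tri i j (v + w) a = C.o.tri i j v a + C.o.tri i j w a := by
  rw [C.o.r16 i j hij v w a, hv0 _, add_zero]
  exact C.addcommR (adm2_neg_left hij) _ _

lemma tri_neg_cz (hij : adm2 ℓ i j) (hv0 : ∀ x : C.o.Δ j, C.o.circ i j v x = 0) (a : C.o.R i j) :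
    C.o.tri i j (-v) a = - C.o.tri i j v a := by
  have h := C.tri_add_left_cz hij hv0 (-v) a
  rw [add_neg_cancel, C.tri_zero_left hij] at h
  exact (neg_eq_of_add_eq_zero_right h.symm).symm

lemma tri_zsmul_cz (hij : adm2 ℓ i j) (hv0 : ∀ x : C.o.Δ j, C.o.circ i j v x = 0) (n : ℤ)
    (a : C.o.R i j) : C.o.tri i j (n • v) a = n • C.o.tri i j v a := by
  have hsm : ∀ m : ℤ, ∀ x : C.o.Δ j, C.o.circ i j (m • v) x = 0 := fun m x => by
    rw [C.circ_zsmul_left hij, hv0 x, zsmul_zero]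
  induction n using Int.induction_on with
  | zero => rw [zero_zsmul, zero_zsmul, C.tri_zero_left hij]
  | succ n ih =>
    rw [add_zsmul, one_zsmul, C.tri_add_left_cz hij (hsm (n : ℤ)) v a, ih,
      add_zsmul, one_zsmul]
  | pred n ih =>
    rw [show (-(n:ℤ) - 1) = (-(n:ℤ)) + -1 by ring, add_zsmul, neg_one_zsmul,
      C.tri_add_left_cz hij (hsm _) (-v) a, ih, C.tri_neg_cz hij hv0 a,
      add_zsmul, neg_one_zsmul]

end CZ

/-- The largest admissible augmentation. -/
def Dmax (i : ℤ) (hi : adm ℓ i) : AddSubgroup (C.o.Δ i) where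
  carrier := {u | u = C.neg1 i u ∧ ∀ j, adm2 ℓ i j → ∀ v : C.o.Δ j, C.o.circ i j u v = 0}
  zero_mem' := ⟨(C.neg1_zero i hi).symm, fun j hij v => C.circ_zero_left hij v⟩
  add_mem' := by
    rintro a b ⟨ha1, ha2⟩ ⟨hb1, hb2⟩
    refine ⟨by rw [C.hneg1_add i hi, ← ha1, ← hb1], fun j hij v => ?_⟩
    rw [C.o.r10 i j hij, ha2 j hij v, hb2 j hij v, add_zero]
  neg_mem' := by
    rintro a ⟨ha1, ha2⟩
    refine ⟨by rw [C.neg1_neg i hi, ← ha1], fun j hij v => ?_⟩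
    rw [C.circ_neg_left hij, ha2 j hij v, neg_zero]

lemma mem_Dmax {i : ℤ} (hi : adm ℓ i) {u : C.o.Δ i} :
    u ∈ C.Dmax i hi ↔ u = C.neg1 i u ∧
      ∀ j, adm2 ℓ i j → ∀ v : C.o.Δ j, C.o.circ i j u v = 0 := Iff.rfl

lemma Dmin_le_Dmax (i : ℤ) (hi : adm ℓ i) : C.o.Dmin i ≤ C.Dmax i hi := by
  rw [PGOFR.Dmin, AddSubgroup.closure_le]
  rintro x ⟨m, him, a, b, rfl⟩
  exact ⟨(C.hneg1_star i m him a b).symm,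
    fun j hij v => C.Dmin_circ_zero hij (C.star_mem_Dmin him a b) v⟩

lemma Dmax_comm {i : ℤ} (hi : adm ℓ i) {v : C.o.Δ i} (hv : v ∈ C.Dmax i hi) :
    ∀ u, AddCommute u v := by
  obtain ⟨j0, hij0⟩ := exists_partner C.hl hi
  have hdotcase : ∀ j1 : ℤ, adm2 ℓ i j1 → ∀ (w : C.o.Δ j1) (b : C.o.R j1 i),
      AddCommute (C.o.dot j1 i w b) v := by
    intro j1 hij1 w b
    have hcirc : C.o.circ j1 i w v = 0 :=
      C.circ_flip_zero (adm2_symm hij1) (hv.2 j1 hij1 w)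
    have := C.cmt_dot hij1 w b v
    rw [hcirc, C.star_zero_right (adm2_neg_right hij1), neg_zero] at this
    exact cmt_eq_zero_iff.mp this
  refine C.delta_ind hij0 ?_ ?_ ?_ (hdotcase j0 hij0)
    (hdotcase (-j0) (adm2_neg_right hij0)) ?_
  · exact AddCommute.zero_left v
  · intro a b ha hb; exact ha.add_left hb
  · intro a ha; exact ha.neg_left
  · intro a b; exact C.star_addCommute hij0 a b v

lemma Dmax_dot_mem {i j : ℤ} (hij : adm2 ℓ i j) {v : C.o.Δ i}
    (hv : v ∈ C.Dmax i hij.1) (a : C.o.R i j) :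
    C.o.dot i j v a ∈ C.Dmax j hij.2.1 := by
  constructor
  · -- fixed by neg1
    have h1 : C.neg1 j (C.o.dot i j v a) = C.o.dot i j v (-a) :=
      C.hneg1_dot j i (adm2_symm hij) v a
    have h2 : C.o.dot i j v (-a) = C.o.dot i j v a := by
      rw [← C.negdot hij a v, ← hv.1]
    rw [h1, h2]
  · intro k hjk w
    by_cases hki : |k| = |i|
    · -- induct on w
      obtain ⟨m, hma, hmj, hmk⟩ := exists_avoid C.hl |j| |k|
      have hkm : adm2 ℓ k m := ⟨hjk.2.1, hma, hmk.symm⟩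
      have hdotc : ∀ m1 : ℤ, adm2 ℓ k m1 → |m1| ≠ |j| →
          ∀ (w' : C.o.Δ m1) (b' : C.o.R m1 k),
          C.o.circ j k (C.o.dot i j v a) (C.o.dot m1 k w' b') = 0 := by
        intro m1 hkm1 hm1j w' b'
        have hm1i : |m1| ≠ |i| := by rw [← hki]; exact hkm1.2.2.symm
        have h22 : adm3 ℓ j m1 k :=
          ⟨hij.2.1, hkm1.2.1, hjk.2.1, hm1j.symm, hjk.2.2, hkm1.2.2.symm⟩
        rw [C.o.r22 j m1 k h22 (C.o.dot i j v a) w' b']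
        have hz : C.o.circ m1 j w' (C.o.dot i j v a) = 0 := by
          rw [C.o.r22 m1 i j ⟨hkm1.2.1, hij.1, hij.2.1, hm1i, hm1j, hij.2.2⟩ w' v a]
          have : C.o.circ m1 i w' v = 0 :=
            C.circ_flip_zero ⟨hkm1.2.1, hij.1, hm1i⟩
              (hv.2 m1 ⟨hij.1, hkm1.2.1, hm1i.symm⟩ w')
          rw [this, C.mul_zero_left (adm3_neg1 ⟨hkm1.2.1, hij.1, hij.2.1, hm1i, hm1j, hij.2.2⟩)]
        have : C.o.circ j m1 (C.o.dot i j v a) w' = 0 :=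
          C.circ_flip_zero ⟨hij.2.1, hkm1.2.1, hm1j.symm⟩ hz
        rw [this, C.mul_zero_left (adm3_neg1 h22)]
      refine C.delta_ind hkm
        (P := fun w => C.o.circ j k (C.o.dot i j v a) w = 0) ?_ ?_ ?_ (hdotc m hkm hmj)
        (hdotc (-m) (adm2_neg_right hkm) (by rw [abs_neg]; exact hmj)) ?_ w
      · exact C.circ_zero_right hjk _
      · intro x y hx hy
        rw [C.o.r11 j k hjk, hx, hy, add_zero]
      · intro x hx
        rw [C.circ_neg_right hjk, hx, neg_zero]
      · intro a' b'
        exact C.o.r21 j k m ⟨hij.2.1, hjk.2.1, hma, hjk.2.2, hmj.symm, hmk.symm⟩ _ a' b'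
    · -- direct
      refine C.circ_flip_zero hjk ?_
      have h22 : adm3 ℓ k i j :=
        ⟨hjk.2.1, hij.1, hij.2.1, hki, hjk.2.2.symm, hij.2.2⟩
      rw [C.o.r22 k i j h22 w v a]
      have : C.o.circ k i w v = 0 :=
        C.circ_flip_zero ⟨hjk.2.1, hij.1, hki⟩ (hv.2 k ⟨hij.1, hjk.2.1, fun h => hki h.symm⟩ w)
      rw [this, C.mul_zero_left (adm3_neg1 h22)]

lemma Dmax_tau {i : ℤ} (hi : adm ℓ i) (u : C.o.Δ i) :
    u + C.neg1 i u ∈ C.Dmax i hi := by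
  constructor
  · rw [C.hneg1_add i hi, C.neg1_invol hi u, ← (C.commute_neg1 hi u).eq]
  · intro j hij v
    rw [C.o.r10 i j hij, C.negcirc hij v u, add_neg_cancel]

end Ctx
end Stmt16
namespace Stmt16
namespace Ctx
variable {ℓ : ℕ} (C : Ctx ℓ)

/-- Construct a partial graded odd form `ℤ`-algebra structure from any
admissible augmentation `D`. -/
def mkAlg (D : ∀ i : ℤ, AddSubgroup (C.o.Δ i))
    (hD0 : ∀ i, adm ℓ i → C.o.Dmin i ≤ D i)
    (hDc : ∀ i, adm ℓ i → ∀ v ∈ D i, ∀ u, u + v = v + u)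
    (hDn : ∀ i, adm ℓ i → ∀ v ∈ D i, C.neg1 i v = v)
    (hDcirc : ∀ i j, adm2 ℓ i j → ∀ v ∈ D i, ∀ u : C.o.Δ j, C.o.circ i j v u = 0)
    (hDdot : ∀ i j, adm2 ℓ i j → ∀ v ∈ D i, ∀ a, C.o.dot i j v a ∈ D j) :
    PGOFAlgStr ℤ C.o where
  commR i j hij a b := C.addcommR hij a b
  smulR i j k a := k • a
  smulR_add i j hij k a b := C.zsmulR_add hij k a b
  add_smulR i j _ k k' a := add_zsmul a k k'
  mul_smulR i j _ k k' a := mul_zsmul a k k'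
  one_smulR i j _ a := one_zsmul a
  actK i u n := C.act i u n
  actK_add i hi u v k := C.act_add hi u v k
  actK_one i hi u := C.act_one i u
  actK_mul i hi u k k' := C.act_act hi u k k'
  D := D
  D_central := hDc
  D_comm i hi u v := hD0 i hi (C.cmt_mem_Dmin hi u v)
  smulD i k v := k • v
  smulD_mem i _ k v hv := zsmul_mem hv k
  smulD_add i hi k v hv w hw :=
    (show AddCommute v w from (hDc i hi v hv w).symm).zsmul_add k
  add_smulD i _ k k' v _ := add_zsmul v k k'
  mul_smulD i _ k k' v _ := mul_zsmul v k k'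
  one_smulD i _ v _ := one_zsmul v
  actK_comm i hi u v k k' := C.act_cmt hi u v k k'
  τ i u := u + C.neg1 i u
  τ_mem i hi u := hD0 i hi (C.tau_mem_Dmin hi u)
  actK_add_scalar i hi u k k' := C.act_addsc hi u k k'
  actK_D i hi v hv k := C.act_fix (hDn i hi v hv) k
  r31 i j hij v hv u := hDcirc i j hij v hv u
  r32 i j hij a b := hD0 i hij.1 (C.star_mem_Dmin hij a b)
  r33 i j hij v hv a := hDdot i j hij v hv a
  r34 i j hij k a := C.inv_zsmul hij k a
  r35l i j k h c a b := C.mul_zsmul_left h c a b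
  r35r i j k h c a b := C.mul_zsmul_right h c a b
  r36l i j hij c a b := C.star_zsmul_left hij c a b
  r36r i j hij c a b := C.star_zsmul_right hij c a b
  r37l i j hij c u v := C.circ_act_left hij c u v
  r37r i j hij c u v := C.circ_act_right hij c u v
  r38l i j hij c u a := C.tri_act hij c a u
  r38r i j hij c u a := C.tri_zsmul_right hij c u a
  r39 i j hij c v hv a := C.tri_zsmul_cz hij (fun x => hDcirc i j hij v hv x) c a
  r40l i j hij c u a := C.dot_act hij c a u
  r40r i j hij c u a := C.act_dot hij u a c
  r41 i j hij c v _ a := C.dot_zsmul_left hij c v a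

end Ctx
end Stmt16
namespace Stmt16
namespace Ctx
variable {ℓ : ℕ} (C : Ctx ℓ) (s : PGOFAlgStr ℤ C.o)

lemma s_smulR_eq {i j : ℤ} (hij : adm2 ℓ i j) (c : ℤ) (a : C.o.R i j) :
    s.smulR i j c a = c • a := by
  have h0 : s.smulR i j 0 a = 0 := by
    have h := s.add_smulR i j hij 0 0 a
    rw [add_zero] at h
    exact add_eq_right.mp h.symm
  have hneg : s.smulR i j (-1) a = -a := by
    have h := s.add_smulR i j hij 1 (-1) a
    rw [add_neg_cancel, h0, s.one_smulR i j hij] at h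
    exact (neg_eq_of_add_eq_zero_right h.symm).symm
  induction c using Int.induction_on with
  | zero => rw [h0, zero_zsmul]
  | succ n ih =>
    have h := s.add_smulR i j hij (n : ℤ) 1 a
    rw [s.one_smulR i j hij, ih] at h
    rw [h, add_zsmul, one_zsmul]
  | pred n ih =>
    have h := s.add_smulR i j hij (-(n : ℤ)) (-1) a
    rw [hneg, ih] at h
    rw [show (-(n:ℤ) - 1) = (-(n:ℤ)) + (-1) by ring, h, add_zsmul, neg_one_zsmul]

lemma s_smulD_eq {i : ℤ} (hi : adm ℓ i) (c : ℤ) {v : C.o.Δ i} (hv : v ∈ s.D i) :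
    s.smulD i c v = c • v := by
  have h0 : s.smulD i 0 v = 0 := by
    have h := s.add_smulD i hi 0 0 v hv
    rw [add_zero] at h
    exact add_eq_right.mp h.symm
  have hneg : s.smulD i (-1) v = -v := by
    have h := s.add_smulD i hi 1 (-1) v hv
    rw [add_neg_cancel, h0, s.one_smulD i hi v hv] at h
    exact (neg_eq_of_add_eq_zero_right h.symm).symm
  induction c using Int.induction_on with
  | zero => rw [h0, zero_zsmul]
  | succ n ih =>
    have h := s.add_smulD i hi (n : ℤ) 1 v hv
    rw [s.one_smulD i hi v hv, ih] at h
    rw [h, add_zsmul, one_zsmul]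
  | pred n ih =>
    have h := s.add_smulD i hi (-(n : ℤ)) (-1) v hv
    rw [hneg, ih] at h
    rw [show (-(n:ℤ) - 1) = (-(n:ℤ)) + (-1) by ring, h, add_zsmul, neg_one_zsmul]

lemma s_act_zero {i : ℤ} (hi : adm ℓ i) (u : C.o.Δ i) : s.actK i u 0 = 0 := by
  have h := s.actK_add_scalar i hi u 0 0
  rw [add_zero, mul_zero, C.s_smulD_eq s hi 0 (s.τ_mem i hi u), zero_zsmul,
    add_zero] at h
  exact add_eq_right.mp h.symm

lemma s_act_neg_one {i : ℤ} (hi : adm ℓ i) :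
    ∀ u : C.o.Δ i, s.actK i u (-1) = C.neg1 i u := by
  obtain ⟨j0, hij0⟩ := exists_partner C.hl hi
  have hactadd : ∀ u v : C.o.Δ i,
      s.actK i (u + v) (-1) = s.actK i u (-1) + s.actK i v (-1) :=
    fun u v => s.actK_add i hi u v (-1)
  have hdotcase : ∀ j1 : ℤ, adm2 ℓ i j1 → ∀ (w : C.o.Δ j1) (b : C.o.R j1 i),
      s.actK i (C.o.dot j1 i w b) (-1) = C.neg1 i (C.o.dot j1 i w b) := by
    intro j1 hij1 w b
    rw [s.r40r j1 i (adm2_symm hij1) (-1) w b, C.s_smulR_eq s (adm2_symm hij1),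
      neg_one_zsmul, C.hneg1_dot i j1 hij1 w b]
  have hz : s.actK i 0 (-1) = 0 := by
    have h := s.actK_add i hi 0 0 (-1)
    rw [add_zero] at h
    exact add_eq_right.mp h.symm
  refine C.delta_ind hij0 ?_ ?_ ?_ (hdotcase j0 hij0)
    (hdotcase (-j0) (adm2_neg_right hij0)) ?_
  · rw [hz, C.neg1_zero i hi]
  · intro u v hu hv
    rw [hactadd u v, hu, hv, C.hneg1_add i hi]
  · intro u hu
    have h := hactadd u (-u)
    rw [add_neg_cancel, hz] at h
    rw [C.neg1_neg i hi u, ← hu]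
    exact (neg_eq_of_add_eq_zero_right h.symm).symm
  · intro a b
    have hm := s.r32 i j0 hij0 a b
    rw [s.actK_D i hi _ hm (-1), show ((-1 : ℤ) * (-1 : ℤ)) = 1 by norm_num,
      s.one_smulD i hi _ hm, C.hneg1_star i j0 hij0 a b]

lemma s_tau {i : ℤ} (hi : adm ℓ i) (u : C.o.Δ i) :
    s.τ i u = u + C.neg1 i u := by
  have hτc : ∀ z : C.o.Δ i, AddCommute (s.τ i u) z :=
    fun z => (s.D_central i hi (s.τ i u) (s.τ_mem i hi u) z).symm
  have h := s.actK_add_scalar i hi u 1 (-1)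
  rw [add_neg_cancel, C.s_act_zero s hi, s.actK_one i hi u, C.s_act_neg_one s hi,
    one_mul, C.s_smulD_eq s hi (-1) (s.τ_mem i hi u), neg_one_zsmul] at h
  rw [add_assoc, ((hτc (C.neg1 i u)).neg_left).eq, ← add_assoc] at h
  exact (add_neg_eq_zero.mp h.symm).symm

lemma s_act_formula {i : ℤ} (hi : adm ℓ i) (u : C.o.Δ i) (n : ℤ) :
    s.actK i u n = C.act i u n := by
  induction n using Int.induction_on with
  | zero => rw [C.s_act_zero s hi, C.act_zero_n]
  | succ n ih =>
    have h := s.actK_add_scalar i hi u (n : ℤ) 1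
    rw [s.actK_one i hi u, mul_one, C.s_smulD_eq s hi (n : ℤ) (s.τ_mem i hi u),
      C.s_tau s hi u, ih] at h
    rw [h, C.act_succ hi]
  | pred n ih =>
    have h := s.actK_add_scalar i hi u (-(n : ℤ)) (-1)
    rw [C.s_act_neg_one s hi, mul_neg_one, neg_neg,
      C.s_smulD_eq s hi (n : ℤ) (s.τ_mem i hi u), C.s_tau s hi u, ih] at h
    rw [C.act_pred hi u (-(n:ℤ)), neg_neg,
      show (-(n:ℤ) - 1) = (-(n:ℤ)) + (-1) by ring]
    exact h

/-- The largest augmentation computed from a single index. -/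
lemma Dmax_fixed {i j : ℤ} (hij : adm2 ℓ i j) :
    ({u | u = C.neg1 i u ∧ ∀ j', adm2 ℓ i j' → ∀ v : C.o.Δ j', C.o.circ i j' u v = 0}
      : Set (C.o.Δ i)) =
    {u | u = C.neg1 i u ∧ (∀ v : C.o.Δ j, C.o.circ i j u v = 0) ∧
      (∀ v : C.o.Δ (-j), C.o.circ i (-j) u v = 0)} := by
  ext u
  constructor
  · rintro ⟨h1, h2⟩
    exact ⟨h1, h2 j hij, h2 (-j) (adm2_neg_right hij)⟩
  · rintro ⟨h1, h2, h3⟩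
    refine ⟨h1, fun j' hij' v => ?_⟩
    by_cases habs : |j'| = |j|
    · rcases abs_eq_abs.mp habs with rfl | rfl
      · exact h2 v
      · exact h3 v
    · have hj'j : adm2 ℓ j' j := ⟨hij'.2.1, hij.2.1, habs⟩
      have hdotcase : ∀ j1 : ℤ, adm2 ℓ i j1 → |j1| ≠ |j'| →
          (∀ w : C.o.Δ j1, C.o.circ i j1 u w = 0) →
          ∀ (w : C.o.Δ j1) (b : C.o.R j1 j'),
          C.o.circ i j' u (C.o.dot j1 j' w b) = 0 := by
        intro j1 hij1 hj1j' hz w b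
        rw [C.o.r22 i j1 j' ⟨hij.1, hij1.2.1, hij'.2.1, hij1.2.2, hij'.2.2, hj1j'⟩ u w b,
          hz w, C.mul_zero_left
            (adm3_neg1 ⟨hij.1, hij1.2.1, hij'.2.1, hij1.2.2, hij'.2.2, hj1j'⟩)]
      refine C.delta_ind hj'j (P := fun v => C.o.circ i j' u v = 0) ?_ ?_ ?_
        (hdotcase j hij (fun h => habs h.symm) h2)
        (hdotcase (-j) (adm2_neg_right hij)
          (by rw [abs_neg]; exact fun h => habs h.symm) h3) ?_ v
      · exact C.circ_zero_right hij' u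
      · intro x y hx hy
        rw [C.o.r11 i j' hij', hx, hy, add_zero]
      · intro x hx
        rw [C.circ_neg_right hij', hx, neg_zero]
      · intro a b
        exact C.o.r21 i j' j ⟨hij.1, hij'.2.1, hij.2.1, hij'.2.2, hij.2.2, habs⟩ u a b

end Ctx
end Stmt16
/-- Lemma `idem-cond`. -/
theorem statement16 {ℓ : ℕ} (hl : 3 ≤ ℓ) (o : PGOFR ℓ)
    (h29 : o.cond29) (h30 : o.cond30)
    -- the homomorphisms `u ↦ u·(-1)`
    (neg1 : ∀ i, o.Δ i → o.Δ i)
    (hneg1_add : ∀ i, adm ℓ i → ∀ u v : o.Δ i,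
      neg1 i (u + v) = neg1 i u + neg1 i v)
    (hneg1_star : ∀ i j, adm2 ℓ i j → ∀ (a : o.R (-i) j) (b : o.R j i),
      neg1 i (o.star i j a b) = o.star i j a b)
    (hneg1_dot : ∀ i j, adm2 ℓ i j → ∀ (u : o.Δ j) (b : o.R j i),
      neg1 i (o.dot j i u b) = o.dot j i u (-b)) :
    -- a partial graded odd form ℤ-algebra structure with the smallest augmentation
    (∃ s : PGOFAlgStr ℤ o, ∀ i, adm ℓ i → s.D i = o.Dmin i) ∧
    -- and one with the largest augmentation
    (∃ s : PGOFAlgStr ℤ o, ∀ i, adm ℓ i → (s.D i : Set (o.Δ i)) =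
      {u | u = neg1 i u ∧ ∀ j, adm2 ℓ i j → ∀ v : o.Δ j, o.circ i j u v = 0}) ∧
    -- the largest augmentation can be computed using a single fixed j⋆
    (∀ i j, adm2 ℓ i j →
      ({u | u = neg1 i u ∧ ∀ j', adm2 ℓ i j' → ∀ v : o.Δ j', o.circ i j' u v = 0}
        : Set (o.Δ i)) =
      {u | u = neg1 i u ∧ (∀ v : o.Δ j, o.circ i j u v = 0) ∧
        (∀ v : o.Δ (-j), o.circ i (-j) u v = 0)}) ∧
    -- the right action of the multiplicative monoid ℤ is uniquely determined
    (∀ s s' : PGOFAlgStr ℤ o, ∀ i, adm ℓ i → ∀ (u : o.Δ i) (n : ℤ),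
      s.actK i u n = s'.actK i u n) ∧
    -- and it is given by the explicit binomial formula
    (∀ s : PGOFAlgStr ℤ o, ∀ i, adm ℓ i → ∀ (u : o.Δ i) (n : ℤ),
      s.actK i u n = ((n * (n + 1)) / 2) • u + ((n * (n - 1)) / 2) • neg1 i u) := by
  classical
  set C : Stmt16.Ctx ℓ :=
    ⟨o, hl, h29, h30, neg1, hneg1_add, hneg1_star, hneg1_dot⟩ with hC
  refine ⟨?_, ?_, ?_, ?_, ?_⟩
  · -- smallest augmentation
    refine ⟨C.mkAlg (fun i => o.Dmin i)
      (fun i _ => le_refl _)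
      (fun i _ v hv u => C.Dmin_central hv u)
      (fun i hi v hv => C.Dmin_neg1_fix hi hv)
      (fun i j hij v hv u => C.Dmin_circ_zero hij hv u)
      (fun i j hij v hv a => C.Dmin_dot_mem hij hv a), fun i _ => rfl⟩
  · -- largest augmentation
    refine ⟨C.mkAlg (fun i => if h : adm ℓ i then C.Dmax i h else ⊥)
      (fun i hi => by simp only [dif_pos hi]; exact C.Dmin_le_Dmax i hi)
      (fun i hi v hv u => by simp only [dif_pos hi] at hv; exact (C.Dmax_comm hi hv u).eq)
      (fun i hi v hv => by simp only [dif_pos hi] at hv; exact hv.1.symm)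
      (fun i j hij v hv u => by simp only [dif_pos hij.1] at hv; exact hv.2 j hij u)
      (fun i j hij v hv a => by
        simp only [dif_pos hij.1] at hv
        simp only [dif_pos hij.2.1]
        exact C.Dmax_dot_mem hij hv a), ?_⟩
    intro i hi
    show ((if h : adm ℓ i then C.Dmax i h else ⊥ : AddSubgroup (o.Δ i)) : Set (o.Δ i)) = _
    rw [dif_pos hi]
    rfl
  · -- single fixed index
    intro i j hij
    exact C.Dmax_fixed hij
  · -- uniqueness of the action
    intro s s' i hi u n
    exact (C.s_act_formula s hi u n).trans (C.s_act_formula s' hi u n).symm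
  · -- explicit formula
    intro s i hi u n
    exact C.s_act_formula s hi u n
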